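/- arXiv:2404.16954 — 5 statements merged into one kernel-verified Lean document; each statement's English description precedes it below -/
import Mathlib

section
/- Let (Ω, 𝒜, P) be a probability space, 𝒢 ⊆ 𝒜 a sub-σ-algebra, S a real-valued random variable independent of 𝒢 with distribution ν, T a 𝒢-measurable real-valued random variable, and B a Bernoulli(p) random variable (p ∈ (0,1]) independent of the σ-algebra generated by 𝒢 together with S. Fix λ ∈ ℝ and define Z = 1{S ≤ T}·1{S > λ} + (1/p)·B·1{S > T}·1{S > λ}. Then E[Z | 𝒢] = ν((λ, ∞)) almost surely; in particular E[Z] = ν((λ, ∞)). -/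
open MeasureTheory ProbabilityTheory

/-- Single-step unbiasedness of the importance-sampled false-positive indicator:
`S` is a fresh OOD score independent of the past `𝒢` with distribution `ν`,
`T` is the `𝒢`-measurable previous threshold, `B` is a Bernoulli(p) labeling coin
independent of `𝒢 ⊔ σ(S)`, and
`Z = 1{S ≤ T}·1{S > λ} + (1/p)·B·1{S > T}·1{S > λ}`.
Then `E[Z | 𝒢] = ν((λ, ∞))` a.s., and in particular `E[Z] = ν((λ, ∞))`. -/
theorem stmt_0
    {Ω : Type*} (𝒢 : MeasurableSpace Ω) [m : MeasurableSpace Ω] (h𝒢 : 𝒢 ≤ m)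
    (P : Measure Ω) [IsProbabilityMeasure P]
    (S T B : Ω → ℝ) (ν : Measure ℝ) (p lam : ℝ)
    (hp : p ∈ Set.Ioc (0 : ℝ) 1)
    (hS : Measurable S)
    (hSν : P.map S = ν)
    (hSindep : Indep (MeasurableSpace.comap S inferInstance) 𝒢 P)
    (hT : Measurable[𝒢] T)
    (hB : Measurable B)
    (hB01 : ∀ ω, B ω = 0 ∨ B ω = 1)
    (hBp : P {ω | B ω = 1} = ENNReal.ofReal p)
    (hBindep : Indep (MeasurableSpace.comap B inferInstance)
      (𝒢 ⊔ MeasurableSpace.comap S inferInstance) P)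
    (Z : Ω → ℝ)
    (hZ : ∀ ω, Z ω = (if S ω ≤ T ω ∧ lam < S ω then (1 : ℝ) else 0)
      + (1 / p) * B ω * (if T ω < S ω ∧ lam < S ω then (1 : ℝ) else 0)) :
    P[Z | 𝒢] =ᵐ[P] (fun _ => (ν (Set.Ioi lam)).toReal)
      ∧ ∫ ω, Z ω ∂P = (ν (Set.Ioi lam)).toReal := by
  obtain ⟨hp0, hp1⟩ := hp
  have hm' : (𝒢 ⊔ MeasurableSpace.comap S inferInstance) ≤ m := sup_le h𝒢 hS.comap_le
  have hS' : Measurable[𝒢 ⊔ MeasurableSpace.comap S inferInstance] S :=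
    Measurable.of_comap_le le_sup_right
  have hT' : Measurable[𝒢 ⊔ MeasurableSpace.comap S inferInstance] T :=
    hT.mono le_sup_left le_rfl
  -- the key sets
  set A₁ : Set Ω := {ω | S ω ≤ T ω ∧ lam < S ω} with hA₁def
  set A₂ : Set Ω := {ω | T ω < S ω ∧ lam < S ω} with hA₂def
  set Bs : Set Ω := {ω | B ω = 1} with hBsdef
  have hA₁m' : MeasurableSet[𝒢 ⊔ MeasurableSpace.comap S inferInstance] A₁ :=
    MeasurableSet.inter (measurableSet_le hS' hT') (measurableSet_lt measurable_const hS')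
  have hA₂m' : MeasurableSet[𝒢 ⊔ MeasurableSpace.comap S inferInstance] A₂ :=
    MeasurableSet.inter (measurableSet_lt hT' hS') (measurableSet_lt measurable_const hS')
  have hA₁ : MeasurableSet A₁ := hm' _ hA₁m'
  have hA₂ : MeasurableSet A₂ := hm' _ hA₂m'
  have hBsB : MeasurableSet[MeasurableSpace.comap B inferInstance] Bs :=
    ⟨{1}, measurableSet_singleton 1, rfl⟩
  have hBs : MeasurableSet Bs := hB (measurableSet_singleton 1)
  -- indicator form of Z
  have hZ' : Z = fun ω => A₁.indicator (fun _ => (1:ℝ)) ω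
      + (1/p) * (Bs ∩ A₂).indicator (fun _ => (1:ℝ)) ω := by
    funext ω
    rw [hZ ω]
    rcases hB01 ω with h | h <;>
      simp [Set.indicator_apply, hA₁def, hA₂def, hBsdef, Set.mem_setOf_eq, h,
        Set.mem_inter_iff]
  have hZint : Integrable Z P := by
    rw [hZ']
    apply Integrable.add
    · exact (integrable_const (1:ℝ)).indicator hA₁
    · exact ((integrable_const (1:ℝ)).indicator (hBs.inter hA₂)).const_mul (1/p)
  -- the key set-integral computation
  have key : ∀ A : Set Ω, MeasurableSet[𝒢] A →
      ∫ ω in A, Z ω ∂P = (ν (Set.Ioi lam)).toReal * (P A).toReal := by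
    intro A hA
    have hAm : MeasurableSet A := h𝒢 _ hA
    have h1 : ∫ ω in A, A₁.indicator (fun _ => (1:ℝ)) ω ∂P = (P (A ∩ A₁)).toReal := by
      rw [setIntegral_indicator hA₁]
      simp [Measure.restrict_apply, hAm]
      rfl
    have hBsint : P (Bs ∩ (A ∩ A₂)) = ENNReal.ofReal p * P (A ∩ A₂) := by
      rw [(Indep_iff _ _ _).1 hBindep Bs (A ∩ A₂) hBsB
        (MeasurableSet.inter (le_sup_left (a := 𝒢)
          (b := MeasurableSpace.comap S inferInstance) _ hA) hA₂m'), hBp]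
    have h2 : ∫ ω in A, (1/p) * (Bs ∩ A₂).indicator (fun _ => (1:ℝ)) ω ∂P
        = (P (A ∩ A₂)).toReal := by
      rw [integral_const_mul, setIntegral_indicator (hBs.inter hA₂)]
      have heq : A ∩ (Bs ∩ A₂) = Bs ∩ (A ∩ A₂) := by
        ext ω; simp only [Set.mem_inter_iff]; tauto
      simp only [integral_const, smul_eq_mul, mul_one, Measure.real,
        Measure.restrict_apply MeasurableSet.univ, Set.univ_inter]
      rw [heq, hBsint, ENNReal.toReal_mul, ENNReal.toReal_ofReal hp0.le]
      field_simp
    have hdisj : Disjoint (A ∩ A₁) (A ∩ A₂) := by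
      rw [Set.disjoint_left]
      rintro ω ⟨-, hω1, -⟩ ⟨-, hω2, -⟩
      exact absurd hω2 (not_lt.2 hω1)
    have hunion : (A ∩ A₁) ∪ (A ∩ A₂) = A ∩ {ω | lam < S ω} := by
      ext ω
      simp only [Set.mem_union, Set.mem_inter_iff, hA₁def, hA₂def, Set.mem_setOf_eq]
      constructor
      · rintro (⟨h, -, h2⟩ | ⟨h, -, h2⟩) <;> exact ⟨h, h2⟩
      · rintro ⟨h, h2⟩
        rcases le_or_gt (S ω) (T ω) with h3 | h3
        · exact Or.inl ⟨h, h3, h2⟩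
        · exact Or.inr ⟨h, h3, h2⟩
    have hmeas_sum : P (A ∩ A₁) + P (A ∩ A₂) = P (A ∩ {ω | lam < S ω}) := by
      rw [← hunion, measure_union hdisj (hAm.inter hA₂)]
    have hSset : P (A ∩ {ω | lam < S ω}) = ν (Set.Ioi lam) * P A := by
      have h1' : {ω | lam < S ω} = S ⁻¹' Set.Ioi lam := rfl
      have h2' : P (S ⁻¹' Set.Ioi lam) = ν (Set.Ioi lam) := by
        rw [← hSν, Measure.map_apply hS measurableSet_Ioi]
      rw [Set.inter_comm, h1',
        (Indep_iff _ _ _).1 hSindep _ A ⟨Set.Ioi lam, measurableSet_Ioi, rfl⟩ hA, h2']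
    calc ∫ ω in A, Z ω ∂P
        = ∫ ω in A, (A₁.indicator (fun _ => (1:ℝ)) ω
            + (1/p) * (Bs ∩ A₂).indicator (fun _ => (1:ℝ)) ω) ∂P := by rw [hZ']
      _ = (P (A ∩ A₁)).toReal + (P (A ∩ A₂)).toReal := by
          rw [integral_add ((integrable_const (1:ℝ)).indicator hA₁).integrableOn
            ((((integrable_const (1:ℝ)).indicator (hBs.inter hA₂)).const_mul
              (1/p)).integrableOn), h1, h2]
      _ = (ν (Set.Ioi lam)).toReal * (P A).toReal := by
          rw [← ENNReal.toReal_add (measure_ne_top _ _) (measure_ne_top _ _),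
            hmeas_sum, hSset, ENNReal.toReal_mul]
  constructor
  · refine (ae_eq_condExp_of_forall_setIntegral_eq h𝒢 hZint
      (fun s _ _ => (integrable_const _).integrableOn)
      (fun s hs _ => ?_)
      (StronglyMeasurable.aestronglyMeasurable stronglyMeasurable_const)).symm
    rw [key s hs, setIntegral_const, smul_eq_mul, mul_comm]
    rfl
  · have := key Set.univ MeasurableSet.univ
    simpa [measure_univ] using this
end

section
/- Let Λ be a finite nonempty index set with L = |Λ|, let (F_t)_{t≥0} be a filtration, and for each λ ∈ Λ let (M_t(λ))_{t≥0} be a martingale with respect to (F_t)_{t≥0} with M_0(λ) = 0 and |M_t(λ) − M_{t−1}(λ)| ≤ ρ_t almost surely, for a common sequence of positive constants (ρ_t)_{t≥1}. Write V_t = Σ_{i=1}^t ρ_i². Fix δ ∈ (0,1) and let t_0 = min{u ≥ 1 : V_u ≥ 173 log(4L/δ)}. Then with probability at least 1 − δ, simultaneously for all λ ∈ Λ and all t ≥ t_0, |M_t(λ)| < sqrt( 3 V_t ( 2 log log(3 V_t) + log(2L/δ) ) ). -/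
open MeasureTheory ProbabilityTheory ENNReal

section LILProof
open Real Filter Finset
set_option linter.unusedSectionVars false
set_option linter.deprecated false

/-- convexity bound: for `|d| ≤ r`, `exp (c*d) ≤ cosh (c*r) + (d/r) * sinh (c*r)`. -/
lemma exp_le_cosh_add (c d r : ℝ) (hr : 0 < r) (hd : |d| ≤ r) :
    Real.exp (c * d) ≤ Real.cosh (c * r) + (d / r) * Real.sinh (c * r) := by
  obtain ⟨hd1, hd2⟩ := abs_le.1 hd
  have hrd : 0 ≤ r - d := by linarith
  have hrd' : 0 ≤ r + d := by linarith
  have hθ0 : 0 ≤ (r - d) / (2 * r) := by positivity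
  have hθ1 : 0 ≤ (r + d) / (2 * r) := by positivity
  have hsum : (r - d) / (2 * r) + (r + d) / (2 * r) = 1 := by
    field_simp; ring
  have hconv := convexOn_exp.2 (Set.mem_univ (-(c * r))) (Set.mem_univ (c * r)) hθ0 hθ1 hsum
  rw [smul_eq_mul, smul_eq_mul, smul_eq_mul, smul_eq_mul] at hconv
  have harg : (r - d) / (2 * r) * (-(c * r)) + (r + d) / (2 * r) * (c * r) = c * d := by
    field_simp
    ring
  rw [harg] at hconv
  refine hconv.trans_eq ?_
  rw [Real.cosh_eq, Real.sinh_eq]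
  field_simp
  ring

section
variable {Ω : Type*} [m : MeasurableSpace Ω] {P : Measure Ω} [IsProbabilityMeasure P]
  {ℱ : Filtration ℕ m} {N : ℕ → Ω → ℝ} {ρ : ℕ → ℝ}

/-- a.s. bound on the martingale at each time. -/
lemma mart_abs_le (hN0 : N 0 = 0)
    (hNinc : ∀ t, ∀ᵐ ω ∂P, |N (t+1) ω - N t ω| ≤ ρ (t+1)) (t : ℕ) :
    ∀ᵐ ω ∂P, |N t ω| ≤ ∑ i ∈ Finset.Icc 1 t, ρ i := by
  induction t with
  | zero =>
    filter_upwards with ω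
    simp [hN0]
  | succ n ih =>
    filter_upwards [ih, hNinc n] with ω h1 h2
    have e : N (n+1) ω = N n ω + (N (n+1) ω - N n ω) := by ring
    have : |N (n+1) ω| ≤ |N n ω| + ρ (n+1) := by
      rw [e]
      exact (abs_add_le _ _).trans (by linarith)
    rw [Finset.sum_Icc_succ_top (Nat.one_le_iff_ne_zero.2 (Nat.succ_ne_zero n))]
    linarith

lemma exp_mart_integrable (hNmart : Martingale N ℱ P) (hN0 : N 0 = 0)
    (hNinc : ∀ t, ∀ᵐ ω ∂P, |N (t+1) ω - N t ω| ≤ ρ (t+1)) (c : ℝ) (t : ℕ) :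
    Integrable (fun ω => Real.exp (c * N t ω)) P := by
  have hsm : StronglyMeasurable (N t) := (hNmart.stronglyMeasurable t).mono (ℱ.le t)
  have hmeas : AEStronglyMeasurable (fun ω => Real.exp (c * N t ω)) P :=
    ((hsm.measurable.const_mul c).exp).aestronglyMeasurable
  refine (integrable_const (Real.exp (|c| * ∑ i ∈ Finset.Icc 1 t, ρ i))).mono' hmeas ?_
  filter_upwards [mart_abs_le hN0 hNinc t] with ω hω
  rw [Real.norm_eq_abs, Real.abs_exp]
  apply Real.exp_le_exp.2
  calc c * N t ω ≤ |c * N t ω| := le_abs_self _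
    _ = |c| * |N t ω| := abs_mul _ _
    _ ≤ |c| * ∑ i ∈ Finset.Icc 1 t, ρ i := mul_le_mul_of_nonneg_left hω (abs_nonneg c)

lemma exp_mart_mul_inc_integrable (hNmart : Martingale N ℱ P) (hN0 : N 0 = 0)
    (hNinc : ∀ t, ∀ᵐ ω ∂P, |N (t+1) ω - N t ω| ≤ ρ (t+1)) (c : ℝ) (t : ℕ) :
    Integrable (fun ω => Real.exp (c * N t ω) * (N (t+1) ω - N t ω)) P := by
  have hsm : StronglyMeasurable (N t) := (hNmart.stronglyMeasurable t).mono (ℱ.le t)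
  have hsm' : StronglyMeasurable (N (t+1)) := (hNmart.stronglyMeasurable (t+1)).mono (ℱ.le (t+1))
  have hmeas : AEStronglyMeasurable (fun ω => Real.exp (c * N t ω) * (N (t+1) ω - N t ω)) P :=
    (((hsm.measurable.const_mul c).exp).mul
      (hsm'.measurable.sub hsm.measurable)).aestronglyMeasurable
  refine (integrable_const (Real.exp (|c| * ∑ i ∈ Finset.Icc 1 t, ρ i) * ρ (t+1))).mono'
    hmeas ?_
  filter_upwards [mart_abs_le hN0 hNinc t, hNinc t] with ω h1 h2
  rw [Real.norm_eq_abs, abs_mul, Real.abs_exp]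
  have e1 : Real.exp (c * N t ω) ≤ Real.exp (|c| * ∑ i ∈ Finset.Icc 1 t, ρ i) := by
    apply Real.exp_le_exp.2
    calc c * N t ω ≤ |c * N t ω| := le_abs_self _
      _ = |c| * |N t ω| := abs_mul _ _
      _ ≤ _ := mul_le_mul_of_nonneg_left h1 (abs_nonneg c)
  exact mul_le_mul e1 h2 (abs_nonneg _) (Real.exp_nonneg _)

/-- orthogonality of increments to bounded past quantities. -/
lemma orth (hNmart : Martingale N ℱ P) (hN0 : N 0 = 0)
    (hNinc : ∀ t, ∀ᵐ ω ∂P, |N (t+1) ω - N t ω| ≤ ρ (t+1)) (c : ℝ) (t : ℕ) :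
    ∫ ω, Real.exp (c * N t ω) * (N (t+1) ω - N t ω) ∂P = 0 := by
  have hsmF : StronglyMeasurable[ℱ t] (fun ω => Real.exp (c * N t ω)) :=
    Real.continuous_exp.comp_stronglyMeasurable ((hNmart.stronglyAdapted t).const_smul c)
  have hD : Integrable (fun ω => N (t+1) ω - N t ω) P :=
    (hNmart.integrable (t+1)).sub (hNmart.integrable t)
  have hcond := condExp_mul_of_stronglyMeasurable_left (m := ℱ t) (μ := P) hsmF
    (exp_mart_mul_inc_integrable hNmart hN0 hNinc c t) hD
  have hzero : P[fun ω => N (t+1) ω - N t ω|ℱ t] =ᵐ[P] 0 := by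
    have h1 := condExp_sub (m := ℱ t) (μ := P) (hNmart.integrable (t+1)) (hNmart.integrable t)
    have h2 := hNmart.condExp_ae_eq (Nat.le_succ t)
    have h3 : P[N t|ℱ t] = N t :=
      condExp_of_stronglyMeasurable (ℱ.le t) (hNmart.stronglyAdapted t) (hNmart.integrable t)
    have h1' : P[fun ω => N (t+1) ω - N t ω|ℱ t] =ᵐ[P] P[N (t+1)|ℱ t] - P[N t|ℱ t] := h1
    filter_upwards [h1', h2] with ω hω1 hω2
    simp only [Pi.sub_apply, Pi.zero_apply] at *
    rw [hω1, hω2, h3]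
    simp
  calc ∫ ω, Real.exp (c * N t ω) * (N (t+1) ω - N t ω) ∂P
      = ∫ ω, (P[(fun ω => Real.exp (c * N t ω)) * (fun ω => N (t+1) ω - N t ω)|ℱ t]) ω ∂P := by
        rw [integral_condExp (ℱ.le t)]
        rfl
    _ = ∫ ω, (Real.exp (c * N t ω) * (P[fun ω => N (t+1) ω - N t ω|ℱ t]) ω) ∂P :=
        integral_congr_ae (by filter_upwards [hcond] with ω hω using hω)
    _ = ∫ ω, (Real.exp (c * N t ω) * (0:Ω → ℝ) ω) ∂P := by
        refine integral_congr_ae ?_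
        filter_upwards [hzero] with ω hω
        rw [hω]
    _ = 0 := by simp

end


section
variable {Ω : Type*} [m : MeasurableSpace Ω] {P : Measure Ω} [IsProbabilityMeasure P]
  {ℱ : Filtration ℕ m} {N : ℕ → Ω → ℝ} {ρ : ℕ → ℝ}

/-- `exp (c • N)` is a submartingale. -/
lemma exp_mart_submartingale (hNmart : Martingale N ℱ P) (hN0 : N 0 = 0)
    (hNinc : ∀ t, ∀ᵐ ω ∂P, |N (t+1) ω - N t ω| ≤ ρ (t+1)) (c : ℝ) :
    Submartingale (fun t ω => Real.exp (c * N t ω)) ℱ P := by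
  refine submartingale_nat (fun t => Real.continuous_exp.comp_stronglyMeasurable
      ((hNmart.stronglyAdapted t).const_smul c))
    (fun t => exp_mart_integrable hNmart hN0 hNinc c t) (fun i => ?_)
  set F : Ω → ℝ := fun ω => Real.exp (c * N i ω) with hF
  set G : Ω → ℝ := fun ω => Real.exp (c * N i ω) * (N (i+1) ω - N i ω) with hG
  have hFi : Integrable F P := exp_mart_integrable hNmart hN0 hNinc c i
  have hGi : Integrable G P := exp_mart_mul_inc_integrable hNmart hN0 hNinc c i
  have hle : (fun ω => F ω + c * G ω) ≤ᵐ[P] fun ω => Real.exp (c * N (i+1) ω) := by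
    filter_upwards with ω
    have key : Real.exp (c * N (i+1) ω) = F ω * Real.exp (c * (N (i+1) ω - N i ω)) := by
      rw [hF, ← Real.exp_add]; ring_nf
    have h1 : 1 + c * (N (i+1) ω - N i ω) ≤ Real.exp (c * (N (i+1) ω - N i ω)) := by
      have := Real.add_one_le_exp (c * (N (i+1) ω - N i ω)); linarith
    have hFpos : 0 < F ω := Real.exp_pos _
    calc F ω + c * G ω = F ω * (1 + c * (N (i+1) ω - N i ω)) := by rw [hG]; ring
      _ ≤ F ω * Real.exp (c * (N (i+1) ω - N i ω)) :=
          mul_le_mul_of_nonneg_left h1 hFpos.le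
      _ = Real.exp (c * N (i+1) ω) := key.symm
  have hcond := condExp_mono (μ := P) (m := ℱ i) (hFi.add (hGi.const_mul c))
    (exp_mart_integrable hNmart hN0 hNinc c (i+1)) hle
  -- identify μ[F + c*G | ℱ i] with F
  have hsmF : StronglyMeasurable[ℱ i] F :=
    Real.continuous_exp.comp_stronglyMeasurable ((hNmart.stronglyAdapted i).const_smul c)
  have hsmF' : StronglyMeasurable[ℱ i] (fun ω => c * F ω) := hsmF.const_smul c
  have hD : Integrable (fun ω => N (i+1) ω - N i ω) P :=
    (hNmart.integrable (i+1)).sub (hNmart.integrable i)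
  have hzero : P[fun ω => N (i+1) ω - N i ω|ℱ i] =ᵐ[P] 0 := by
    have h1' : P[fun ω => N (i+1) ω - N i ω|ℱ i] =ᵐ[P] P[N (i+1)|ℱ i] - P[N i|ℱ i] :=
      condExp_sub (m := ℱ i) (μ := P) (hNmart.integrable (i+1)) (hNmart.integrable i)
    have h2 := hNmart.condExp_ae_eq (Nat.le_succ i)
    have h3 : P[N i|ℱ i] = N i :=
      condExp_of_stronglyMeasurable (ℱ.le i) (hNmart.stronglyAdapted i) (hNmart.integrable i)
    filter_upwards [h1', h2] with ω hω1 hω2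
    simp only [Pi.sub_apply, Pi.zero_apply] at *
    rw [hω1, hω2, h3]; simp
  have hmul : Integrable ((fun ω => c * F ω) * fun ω => N (i+1) ω - N i ω) P := by
    have : ((fun ω => c * F ω) * fun ω => N (i+1) ω - N i ω) = fun ω => c * G ω := by
      funext ω; simp [hG, hF]; ring
    rw [this]; exact hGi.const_mul c
  have hpull := condExp_mul_of_stronglyMeasurable_left (m := ℱ i) (μ := P) hsmF' hmul hD
  have hadd := condExp_add (m := ℱ i) (μ := P) hFi (hGi.const_mul c)
  have hFcond : P[F|ℱ i] = F := condExp_of_stronglyMeasurable (ℱ.le i) hsmF hFi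
  refine EventuallyLE.trans ?_ hcond
  have : P[fun ω => F ω + c * G ω|ℱ i] =ᵐ[P] F := by
    have hGc : (fun ω => F ω + c * G ω) = F + ((fun ω => c * F ω) * fun ω => N (i+1) ω - N i ω) := by
      funext ω; simp [hG, hF]; ring
    rw [hGc]
    refine (condExp_add (m := ℱ i) (μ := P) hFi hmul).trans ?_
    have := hpull
    filter_upwards [hpull, hzero] with ω h1 h2
    simp only [Pi.add_apply]
    rw [hFcond, h1]
    simp only [Pi.mul_apply]
    rw [h2]
    simp
  exact this.symm.le

end


section
variable {Ω : Type*} [m : MeasurableSpace Ω] {P : Measure Ω} [IsProbabilityMeasure P]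
  {ℱ : Filtration ℕ m} {N : ℕ → Ω → ℝ} {ρ : ℕ → ℝ} {V : ℕ → ℝ}

/-- MGF bound. -/
lemma mgf_bound (hNmart : Martingale N ℱ P) (hN0 : N 0 = 0)
    (hNinc : ∀ t, ∀ᵐ ω ∂P, |N (t+1) ω - N t ω| ≤ ρ (t+1))
    (hρ : ∀ t, 1 ≤ t → 0 < ρ t)
    (hV : ∀ t, V t = ∑ i ∈ Finset.Icc 1 t, (ρ i) ^ 2) (c : ℝ) :
    ∀ n, ∫ ω, Real.exp (c * N n ω) ∂P ≤ Real.exp (c^2 * V n / 2) := by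
  intro n
  induction n with
  | zero =>
    have : (fun ω => Real.exp (c * N 0 ω)) = fun _ => (1:ℝ) := by
      funext ω; rw [hN0]; simp
    rw [this, integral_const, hV 0]
    simp
  | succ n ih =>
    set r := ρ (n+1) with hr
    have hrpos : 0 < r := hρ (n+1) (Nat.le_add_left 1 n)
    have hC : 0 ≤ Real.cosh (c * r) := (Real.cosh_pos _).le
    have hle : (fun ω => Real.exp (c * N (n+1) ω)) ≤ᵐ[P]
        fun ω => Real.cosh (c * r) * Real.exp (c * N n ω)
          + (Real.sinh (c * r) / r) * (Real.exp (c * N n ω) * (N (n+1) ω - N n ω)) := by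
      filter_upwards [hNinc n] with ω hω
      have key : Real.exp (c * N (n+1) ω)
          = Real.exp (c * N n ω) * Real.exp (c * (N (n+1) ω - N n ω)) := by
        rw [← Real.exp_add]; ring_nf
      have h2 := exp_le_cosh_add c (N (n+1) ω - N n ω) r hrpos hω
      have hFpos : (0:ℝ) < Real.exp (c * N n ω) := Real.exp_pos _
      calc Real.exp (c * N (n+1) ω)
          = Real.exp (c * N n ω) * Real.exp (c * (N (n+1) ω - N n ω)) := key
        _ ≤ Real.exp (c * N n ω) *
            (Real.cosh (c * r) + (N (n+1) ω - N n ω) / r * Real.sinh (c * r)) :=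
            mul_le_mul_of_nonneg_left h2 hFpos.le
        _ = _ := by field_simp
    have hint1 : Integrable (fun ω => Real.cosh (c * r) * Real.exp (c * N n ω)
        + (Real.sinh (c * r) / r) * (Real.exp (c * N n ω) * (N (n+1) ω - N n ω))) P :=
      ((exp_mart_integrable hNmart hN0 hNinc c n).const_mul _).add
        ((exp_mart_mul_inc_integrable hNmart hN0 hNinc c n).const_mul _)
    have step : ∫ ω, Real.exp (c * N (n+1) ω) ∂P
        ≤ Real.cosh (c * r) * ∫ ω, Real.exp (c * N n ω) ∂P := by
      calc ∫ ω, Real.exp (c * N (n+1) ω) ∂P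
          ≤ ∫ ω, (Real.cosh (c * r) * Real.exp (c * N n ω)
            + (Real.sinh (c * r) / r) * (Real.exp (c * N n ω) * (N (n+1) ω - N n ω))) ∂P :=
            integral_mono_ae (exp_mart_integrable hNmart hN0 hNinc c (n+1)) hint1 hle
        _ = Real.cosh (c * r) * (∫ ω, Real.exp (c * N n ω) ∂P)
            + (Real.sinh (c * r) / r) * ∫ ω, Real.exp (c * N n ω) * (N (n+1) ω - N n ω) ∂P := by
            rw [integral_add ((exp_mart_integrable hNmart hN0 hNinc c n).const_mul _)
              ((exp_mart_mul_inc_integrable hNmart hN0 hNinc c n).const_mul _),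
              integral_const_mul, integral_const_mul]
        _ = Real.cosh (c * r) * ∫ ω, Real.exp (c * N n ω) ∂P := by
            rw [orth hNmart hN0 hNinc c n]; ring
    have hVs : V (n+1) = V n + r^2 := by
      rw [hV (n+1), hV n, Finset.sum_Icc_succ_top (Nat.one_le_iff_ne_zero.2 (Nat.succ_ne_zero n))]
    calc ∫ ω, Real.exp (c * N (n+1) ω) ∂P
        ≤ Real.cosh (c * r) * ∫ ω, Real.exp (c * N n ω) ∂P := step
      _ ≤ Real.exp ((c*r)^2/2) * Real.exp (c^2 * V n / 2) := by
          refine mul_le_mul (Real.cosh_le_exp_half_sq _) ih ?_ (Real.exp_nonneg _)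
          exact integral_nonneg fun ω => Real.exp_nonneg _
      _ = Real.exp (c^2 * V (n+1) / 2) := by
          rw [← Real.exp_add, hVs]; ring_nf

/-- Doob-type bound. -/
lemma doob_exp_bound (hNmart : Martingale N ℱ P) (hN0 : N 0 = 0)
    (hNinc : ∀ t, ∀ᵐ ω ∂P, |N (t+1) ω - N t ω| ≤ ρ (t+1))
    (hρ : ∀ t, 1 ≤ t → 0 < ρ t)
    (hV : ∀ t, V t = ∑ i ∈ Finset.Icc 1 t, (ρ i) ^ 2)
    (c a : ℝ) (hc : 0 ≤ c) (n : ℕ) :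
    P {ω | ∃ t ≤ n, a ≤ N t ω} ≤ ENNReal.ofReal (Real.exp (c^2 * V n / 2 - c * a)) := by
  set f : ℕ → Ω → ℝ := fun t ω => Real.exp (c * N t ω) with hf
  set ε : NNReal := (Real.exp (c * a)).toNNReal with hε
  have hεc : (ε : ℝ) = Real.exp (c * a) := Real.coe_toNNReal _ (Real.exp_nonneg _)
  have hsubset : {ω | ∃ t ≤ n, a ≤ N t ω} ⊆
      {ω | (ε : ℝ) ≤ (range (n + 1)).sup' nonempty_range_add_one fun k => f k ω} := by
    rintro ω ⟨t, htn, hta⟩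
    refine le_trans ?_ (Finset.le_sup' (fun k => f k ω) (Finset.mem_range.2 (Nat.lt_succ_of_le htn)))
    rw [hεc]
    exact Real.exp_le_exp.2 (mul_le_mul_of_nonneg_left hta hc)
  have hmax := maximal_ineq (exp_mart_submartingale hNmart hN0 hNinc c)
    (fun t ω => (Real.exp_pos _).le) (ε := ε) n
  have hint : ∫ ω in {ω | (ε : ℝ) ≤ (range (n + 1)).sup' nonempty_range_add_one fun k => f k ω},
      f n ω ∂P ≤ ∫ ω, f n ω ∂P := by
    refine setIntegral_le_integral (exp_mart_integrable hNmart hN0 hNinc c n) ?_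
    filter_upwards with ω using Real.exp_nonneg _
  have hbound : (ε:ℝ≥0∞) * P {ω | (ε : ℝ) ≤ (range (n + 1)).sup' nonempty_range_add_one
      fun k => f k ω} ≤ ENNReal.ofReal (Real.exp (c^2 * V n / 2)) := by
    refine le_trans hmax ?_
    exact ENNReal.ofReal_le_ofReal (hint.trans
      (mgf_bound hNmart hN0 hNinc hρ hV c n))
  have hεne : (ε:ℝ≥0∞) ≠ 0 := by
    simp only [ne_eq, ENNReal.coe_eq_zero]
    rw [hε]
    simp [Real.toNNReal_eq_zero, not_le, Real.exp_pos]
  have hP : P {ω | (ε : ℝ) ≤ (range (n + 1)).sup' nonempty_range_add_one fun k => f k ω}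
      ≤ ENNReal.ofReal (Real.exp (c^2 * V n / 2)) / (ε:ℝ≥0∞) := by
    rw [ENNReal.le_div_iff_mul_le (Or.inl hεne) (Or.inl ENNReal.coe_ne_top), mul_comm]
    exact hbound
  refine (measure_mono hsubset).trans (hP.trans ?_)
  have : (ε:ℝ≥0∞) = ENNReal.ofReal (Real.exp (c * a)) := by
    rw [ENNReal.ofReal, hε]
  rw [this, ← ENNReal.ofReal_div_of_pos (Real.exp_pos _), ← Real.exp_sub]

end


section
variable {Ω : Type*} [m : MeasurableSpace Ω] {P : Measure Ω} [IsProbabilityMeasure P]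
  {ℱ : Filtration ℕ m} {N : ℕ → Ω → ℝ} {ρ : ℕ → ℝ} {V : ℕ → ℝ}

/-- one-sided epoch bound. -/
lemma one_sided (hNmart : Martingale N ℱ P) (hN0 : N 0 = 0)
    (hNinc : ∀ t, ∀ᵐ ω ∂P, |N (t+1) ω - N t ω| ≤ ρ (t+1))
    (hρ : ∀ t, 1 ≤ t → 0 < ρ t)
    (hV : ∀ t, V t = ∑ i ∈ Finset.Icc 1 t, (ρ i) ^ 2)
    (b a : ℝ) (hb : 0 < b) (ha : 0 ≤ a) :
    P {ω | ∃ t, V t ≤ 3/2 * b ∧ a ≤ N t ω} ≤ ENNReal.ofReal (Real.exp (-(a^2 / (3 * b)))) := by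
  have hV0 : V 0 = 0 := by rw [hV 0]; simp
  set c : ℝ := 2 * a / (3 * b) with hc
  have hc0 : 0 ≤ c := by positivity
  set C : ℕ → Set Ω := fun n => {ω | ∃ t ≤ n, V t ≤ 3/2 * b ∧ a ≤ N t ω} with hC
  have hmono : Monotone C := by
    intro i j hij ω
    rintro ⟨t, ht, h⟩
    exact ⟨t, ht.trans hij, h⟩
  have hunion : {ω | ∃ t, V t ≤ 3/2 * b ∧ a ≤ N t ω} = ⋃ n, C n := by
    ext ω
    simp only [Set.mem_setOf_eq, Set.mem_iUnion, hC]
    constructor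
    · rintro ⟨t, h⟩; exact ⟨t, t, le_refl t, h⟩
    · rintro ⟨n, t, _, h⟩; exact ⟨t, h⟩
  rw [hunion, hmono.measure_iUnion]
  refine iSup_le fun n => ?_
  -- last admissible time ≤ n
  set s : Finset ℕ := (range (n+1)).filter (fun t => V t ≤ 3/2 * b) with hs
  have hs0 : (0:ℕ) ∈ s := by
    simp only [hs, Finset.mem_filter, Finset.mem_range]
    exact ⟨Nat.succ_pos n, by rw [hV0]; positivity⟩
  have hsne : s.Nonempty := ⟨0, hs0⟩
  set n' := s.max' hsne with hn'
  have hVn' : V n' ≤ 3/2 * b := by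
    have := s.max'_mem hsne
    simp only [hs, Finset.mem_filter] at this
    exact this.2
  have hsub : C n ⊆ {ω | ∃ t ≤ n', a ≤ N t ω} := by
    rintro ω ⟨t, htn, hVt, hNt⟩
    refine ⟨t, ?_, hNt⟩
    apply Finset.le_max'
    simp only [hs, Finset.mem_filter, Finset.mem_range]
    exact ⟨Nat.lt_succ_of_le htn, hVt⟩
  refine (measure_mono hsub).trans ?_
  refine (doob_exp_bound hNmart hN0 hNinc hρ hV c a hc0 n').trans ?_
  apply ENNReal.ofReal_le_ofReal
  apply Real.exp_le_exp.2
  have h1 : c^2 * V n' / 2 ≤ c^2 * (3/2*b) / 2 := by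
    have := sq_nonneg c
    have hm : c^2 * V n' ≤ c^2 * (3/2*b) := mul_le_mul_of_nonneg_left hVn' (sq_nonneg c)
    linarith
  have h2 : c^2 * (3/2*b) / 2 - c * a = -(a^2 / (3*b)) := by
    rw [hc]
    field_simp
    ring
  linarith

end

/-- numeric sum bound -/
lemma sum_inv_sq_le (Nn : ℕ) :
    ∑ k ∈ Finset.range Nn, ((6 + (k:ℝ)/4)⁻¹)^2 ≤ 1 := by
  have key : ∀ n : ℕ, ∑ k ∈ Finset.range (n+1), ((6 + (k:ℝ)/4)⁻¹)^2
      ≤ 1/36 + 4 * (1/6 - (6 + (n:ℝ)/4)⁻¹) := by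
    intro n
    induction n with
    | zero => simp; norm_num
    | succ n ih =>
      rw [Finset.sum_range_succ]
      have hp : (0:ℝ) < 6 + (n:ℝ)/4 := by positivity
      have hq : (0:ℝ) < 6 + ((n:ℝ)+1)/4 := by positivity
      have hcast : ((n+1 : ℕ) : ℝ) = (n:ℝ) + 1 := by push_cast; ring
      rw [hcast]
      have hstep : ((6 + ((n:ℝ)+1)/4)⁻¹)^2
          ≤ 4 * ((6 + (n:ℝ)/4)⁻¹ - (6 + ((n:ℝ)+1)/4)⁻¹) := by
        have h1 : ((6 + ((n:ℝ)+1)/4)⁻¹)^2 ≤ (6 + (n:ℝ)/4)⁻¹ * (6 + ((n:ℝ)+1)/4)⁻¹ := by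
          rw [pow_two]
          exact mul_le_mul_of_nonneg_right
            (inv_anti₀ hp (by linarith)) (by positivity)
        have h2 : (6 + (n:ℝ)/4)⁻¹ * (6 + ((n:ℝ)+1)/4)⁻¹
            = 4 * ((6 + (n:ℝ)/4)⁻¹ - (6 + ((n:ℝ)+1)/4)⁻¹) := by
          field_simp
          ring
        linarith
      calc ∑ k ∈ Finset.range (n+1), ((6 + (k:ℝ)/4)⁻¹)^2 + ((6 + ((n:ℝ)+1)/4)⁻¹)^2
          ≤ (1/36 + 4 * (1/6 - (6 + (n:ℝ)/4)⁻¹))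
            + 4 * ((6 + (n:ℝ)/4)⁻¹ - (6 + ((n:ℝ)+1)/4)⁻¹) := by
            exact add_le_add ih hstep
        _ = 1/36 + 4 * (1/6 - (6 + ((n:ℝ)+1)/4)⁻¹) := by ring
  cases Nn with
  | zero => simp
  | succ n =>
    refine (key n).trans ?_
    have hq : (0:ℝ) < 6 + (n:ℝ)/4 := by positivity
    have : (0:ℝ) ≤ (6 + (n:ℝ)/4)⁻¹ := by positivity
    nlinarith


/-- Finite LIL deviation bound, uniform over a finite grid `Λ` of thresholds
(union bound over the `L = |Λ|` martingales): with probability at least `1 - δ`,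
simultaneously for all `λ ∈ Λ` and all `t ≥ t₀`,
`|M λ t| < sqrt(3 V t (2 log log (3 V t) + log (2L/δ)))`. -/
theorem stmt_4
    {Ω : Type*} [m : MeasurableSpace Ω] (P : Measure Ω) [IsProbabilityMeasure P]
    {Λ : Type*} [Fintype Λ] [Nonempty Λ]
    (ℱ : Filtration ℕ m) (M : Λ → ℕ → Ω → ℝ) (ρ : ℕ → ℝ) (V : ℕ → ℝ) (δ : ℝ) (t₀ : ℕ)
    (L : ℝ) (hL : L = Fintype.card Λ)
    (hρ : ∀ t, 1 ≤ t → 0 < ρ t)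
    (hM : ∀ l, Martingale (M l) ℱ P) (hM0 : ∀ l, M l 0 = 0)
    (hinc : ∀ l, ∀ t, 1 ≤ t → ∀ᵐ ω ∂P, |M l t ω - M l (t - 1) ω| ≤ ρ t)
    (hV : ∀ t, V t = ∑ i ∈ Finset.Icc 1 t, (ρ i) ^ 2)
    (hδ : δ ∈ Set.Ioo (0 : ℝ) 1)
    (ht₀ : IsLeast {u : ℕ | 1 ≤ u ∧ 173 * Real.log (4 * L / δ) ≤ V u} t₀) :
    (1 : ℝ≥0∞) - ENNReal.ofReal δ ≤
      P {ω | ∀ l, ∀ t, t₀ ≤ t →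
        |M l t ω| <
          Real.sqrt (3 * V t * (2 * Real.log (Real.log (3 * V t)) + Real.log (2 * L / δ)))} := by
  classical
  obtain ⟨⟨ht₀1, ht₀V⟩, -⟩ := ht₀
  obtain ⟨hδ0, hδ1⟩ := hδ
  have hL1 : (1:ℝ) ≤ L := by
    rw [hL]; exact_mod_cast Fintype.card_pos
  have hLpos : (0:ℝ) < L := by linarith
  set x : ℝ := 2 * L / δ with hx
  have hx2 : (2:ℝ) < x := by
    have h1 : 2 * L < 2 * L / δ := by
      rw [lt_div_iff₀ hδ0]; nlinarith
    have : (2:ℝ) ≤ 2 * L := by linarith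
    rw [hx]; linarith
  have hxpos : (0:ℝ) < x := by linarith
  have hlogx : 0 < Real.log x := Real.log_pos (by linarith)
  have hinc' : ∀ l t, ∀ᵐ ω ∂P, |M l (t+1) ω - M l t ω| ≤ ρ (t+1) := by
    intro l t
    have := hinc l (t+1) (Nat.le_add_left 1 t)
    simpa using this
  have hVmono : Monotone V := by
    intro s t hst
    rw [hV s, hV t]
    exact Finset.sum_le_sum_of_subset_of_nonneg
      (Finset.Icc_subset_Icc_right hst) (fun i _ _ => sq_nonneg _)
  have hlog2 : (0.6931471803:ℝ) < Real.log 2 := Real.log_two_gt_d9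
  have hlog4 : (1.386:ℝ) ≤ Real.log (4 * L / δ) := by
    have h4 : (4:ℝ) ≤ 4 * L / δ := by
      have h1 : 4 * L ≤ 4 * L / δ := by
        rw [le_div_iff₀ hδ0]; nlinarith
      linarith
    have h5 : Real.log 4 ≤ Real.log (4 * L / δ) := Real.log_le_log (by norm_num) h4
    have h4e : Real.log 4 = 2 * Real.log 2 := by
      rw [show (4:ℝ) = 2^2 by norm_num, Real.log_pow]
      push_cast; ring
    linarith
  have hb0 : (239:ℝ) ≤ V t₀ := by nlinarith
  have hVt₀pos : (0:ℝ) < V t₀ := by linarith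
  set b : ℕ → ℝ := fun k => V t₀ * (3/2)^k with hbdef
  have hbpos : ∀ k, 0 < b k := fun k => by rw [hbdef]; positivity
  have hexp6 : Real.exp 6 ≤ 717 := by
    have h1 : Real.exp 6 = Real.exp 1 ^ (6:ℕ) := by
      rw [← Real.exp_nat_mul]; norm_num
    have h2 : Real.exp 1 ^ (6:ℕ) ≤ (2.7182818286:ℝ)^(6:ℕ) :=
      pow_le_pow_left₀ (Real.exp_nonneg 1) Real.exp_one_lt_d9.le 6
    have h3 : (2.7182818286:ℝ)^(6:ℕ) ≤ 717 := by norm_num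
    linarith
  have hlog3V : (6:ℝ) ≤ Real.log (3 * V t₀) := by
    rw [Real.le_log_iff_exp_le (by linarith)]
    linarith
  have hlog32 : (1/4:ℝ) ≤ Real.log (3/2) := by
    have h1 : Real.exp (1/4) ^ (4:ℕ) = Real.exp 1 := by
      rw [← Real.exp_nat_mul]; norm_num
    have h2 : Real.exp (1/4) < 3/2 := by
      apply lt_of_pow_lt_pow_left₀ 4 (by norm_num : (0:ℝ) ≤ 3/2)
      rw [h1]
      calc Real.exp 1 < 2.7182818286 := Real.exp_one_lt_d9
        _ ≤ (3/2:ℝ)^(4:ℕ) := by norm_num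
    exact (Real.le_log_iff_exp_le (by norm_num)).2 h2.le
  have hw : ∀ k : ℕ, 6 + (k:ℝ)/4 ≤ Real.log (3 * b k) := by
    intro k
    have he : Real.log (3 * b k) = Real.log (3 * V t₀) + k * Real.log (3/2) := by
      rw [hbdef]
      rw [show 3 * (V t₀ * (3/2)^k) = (3 * V t₀) * (3/2)^k by ring]
      rw [Real.log_mul (by linarith) (by positivity), Real.log_pow]
    rw [he]
    have hk4 : (k:ℝ) * (1/4) ≤ (k:ℝ) * Real.log (3/2) :=
      mul_le_mul_of_nonneg_left hlog32 (Nat.cast_nonneg k)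
    linarith
  have hwpos : ∀ k : ℕ, 0 < Real.log (3 * b k) := by
    intro k
    have h0 : (0:ℝ) ≤ (k:ℝ)/4 := by positivity
    linarith [hw k]
  have hloglognn : ∀ k : ℕ, 0 ≤ Real.log (Real.log (3 * b k)) := by
    intro k
    apply Real.log_nonneg
    have h0 : (0:ℝ) ≤ (k:ℝ)/4 := by positivity
    linarith [hw k]
  set A : ℕ → ℝ :=
    fun k => Real.sqrt (3 * b k * (2 * Real.log (Real.log (3 * b k)) + Real.log x)) with hA
  have hinn_nn : ∀ k, 0 ≤ 2 * Real.log (Real.log (3 * b k)) + Real.log x := by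
    intro k
    have := hloglognn k
    linarith
  have hAnn : ∀ k, 0 ≤ A k := fun k => Real.sqrt_nonneg _
  -- events
  set E1 : Λ → ℕ → Set Ω := fun l k => {ω | ∃ t, V t ≤ 3/2 * b k ∧ A k ≤ M l t ω} with hE1
  set E2 : Λ → ℕ → Set Ω := fun l k => {ω | ∃ t, V t ≤ 3/2 * b k ∧ A k ≤ (-(M l)) t ω} with hE2
  -- probability bounds for events
  have hqk : ∀ k : ℕ, Real.exp (-(A k^2 / (3 * b k)))
      ≤ δ / (2*L) * ((6 + (k:ℝ)/4)⁻¹)^2 := by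
    intro k
    have h3b : (0:ℝ) < 3 * b k := by linarith [hbpos k]
    have hAk : A k^2 = 3 * b k * (2 * Real.log (Real.log (3 * b k)) + Real.log x) := by
      rw [hA]
      exact Real.sq_sqrt (mul_nonneg h3b.le (hinn_nn k))
    have hdiv : A k^2 / (3 * b k) = 2 * Real.log (Real.log (3 * b k)) + Real.log x := by
      rw [hAk, mul_comm, mul_div_assoc, div_self h3b.ne', mul_one]
    set w : ℝ := Real.log (3 * b k) with hwdef
    have hwp : 0 < w := hwpos k
    have hsplit : Real.exp (-(A k^2 / (3 * b k))) = x⁻¹ * (w⁻¹)^2 := by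
      rw [hdiv, show -(2 * Real.log w + Real.log x) = -Real.log x + -(2 * Real.log w) by ring,
        Real.exp_add, Real.exp_neg, Real.exp_log hxpos]
      congr 1
      rw [show -(2 * Real.log w) = -(Real.log w + Real.log w) by ring, neg_add,
        Real.exp_add, Real.exp_neg, Real.exp_log hwp, pow_two]
    rw [hsplit]
    have hxinv : x⁻¹ = δ / (2*L) := by
      rw [hx, inv_div]
    rw [hxinv]
    apply mul_le_mul_of_nonneg_left _ (by positivity)
    have h1 : (0:ℝ) < 6 + (k:ℝ)/4 := by positivity
    have h2 : w⁻¹ ≤ (6 + (k:ℝ)/4)⁻¹ := inv_anti₀ h1 (hw k)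
    exact pow_le_pow_left₀ (by positivity) h2 2
  have hbound : ∀ (l : Λ) (k : ℕ),
      P (E1 l k ∪ E2 l k) ≤ 2 * ENNReal.ofReal (δ / (2*L) * ((6 + (k:ℝ)/4)⁻¹)^2) := by
    intro l k
    have h1 : P (E1 l k) ≤ ENNReal.ofReal (δ / (2*L) * ((6 + (k:ℝ)/4)⁻¹)^2) := by
      refine le_trans (one_sided (hM l) (hM0 l) (hinc' l) hρ hV (b k) (A k)
        (hbpos k) (hAnn k)) (ENNReal.ofReal_le_ofReal (hqk k))
    have h2 : P (E2 l k) ≤ ENNReal.ofReal (δ / (2*L) * ((6 + (k:ℝ)/4)⁻¹)^2) := by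
      refine le_trans (one_sided (N := -(M l)) (hM l).neg ?_ ?_ hρ hV (b k) (A k)
        (hbpos k) (hAnn k)) (ENNReal.ofReal_le_ofReal (hqk k))
      · rw [show (-(M l)) 0 = -(M l 0) from rfl, hM0 l, neg_zero]
      · intro t
        filter_upwards [hinc' l t] with ω hω
        simp only [Pi.neg_apply]
        rw [show -M l (t+1) ω - -M l t ω = -(M l (t+1) ω - M l t ω) by ring, abs_neg]
        exact hω
    calc P (E1 l k ∪ E2 l k) ≤ P (E1 l k) + P (E2 l k) := measure_union_le _ _
      _ ≤ _ := by rw [two_mul]; exact add_le_add h1 h2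
  -- tsum bound
  have htsum : ∑' (k:ℕ), ENNReal.ofReal (δ / (2*L) * ((6 + (k:ℝ)/4)⁻¹)^2)
      ≤ ENNReal.ofReal (δ / (2*L)) := by
    rw [ENNReal.tsum_eq_iSup_sum]
    refine iSup_le fun s => ?_
    obtain ⟨n, hn⟩ := Finset.exists_nat_subset_range s
    have hnn : ∀ k : ℕ, 0 ≤ δ / (2*L) * ((6 + (k:ℝ)/4)⁻¹)^2 := fun k => by positivity
    rw [← ENNReal.ofReal_sum_of_nonneg (fun k _ => hnn k)]
    apply ENNReal.ofReal_le_ofReal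
    calc ∑ k ∈ s, δ / (2*L) * ((6 + (k:ℝ)/4)⁻¹)^2
        ≤ ∑ k ∈ Finset.range n, δ / (2*L) * ((6 + (k:ℝ)/4)⁻¹)^2 :=
          Finset.sum_le_sum_of_subset_of_nonneg hn (fun k _ _ => hnn k)
      _ = δ / (2*L) * ∑ k ∈ Finset.range n, ((6 + (k:ℝ)/4)⁻¹)^2 := by
          rw [Finset.mul_sum]
      _ ≤ δ / (2*L) * 1 := by
          apply mul_le_mul_of_nonneg_left (sum_inv_sq_le n) (by positivity)
      _ = δ / (2*L) := mul_one _
  -- measurability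
  have hmeasM : ∀ (l : Λ) t, Measurable (M l t) := fun l t =>
    (((hM l).stronglyMeasurable t).mono (ℱ.le t)).measurable
  have hmeasE1 : ∀ l k, MeasurableSet (E1 l k) := by
    intro l k
    have he : E1 l k = ⋃ t, {ω | V t ≤ 3/2 * b k ∧ A k ≤ M l t ω} := by
      rw [hE1]; ext ω; simp [Set.mem_iUnion]
    rw [he]
    refine MeasurableSet.iUnion fun t => ?_
    by_cases h : V t ≤ 3/2 * b k
    · simp only [h, true_and]
      exact measurableSet_le measurable_const (hmeasM l t)
    · convert MeasurableSet.empty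
      ext ω; simp [h]
  have hmeasE2 : ∀ l k, MeasurableSet (E2 l k) := by
    intro l k
    have he : E2 l k = ⋃ t, {ω | V t ≤ 3/2 * b k ∧ A k ≤ -(M l t ω)} := by
      rw [hE2]; ext ω; simp [Set.mem_iUnion]
    rw [he]
    refine MeasurableSet.iUnion fun t => ?_
    by_cases h : V t ≤ 3/2 * b k
    · simp only [h, true_and]
      exact measurableSet_le measurable_const (hmeasM l t).neg
    · convert MeasurableSet.empty
      ext ω; simp [h]
  set Bad : Set Ω := ⋃ l, ⋃ k, (E1 l k ∪ E2 l k) with hBad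
  have hmeasBad : MeasurableSet Bad :=
    MeasurableSet.iUnion fun l => MeasurableSet.iUnion fun k =>
      (hmeasE1 l k).union (hmeasE2 l k)
  have hPBad : P Bad ≤ ENNReal.ofReal δ := by
    calc P Bad ≤ ∑' (l:Λ), P (⋃ k, (E1 l k ∪ E2 l k)) := measure_iUnion_le _
      _ ≤ ∑' (l:Λ), ∑' (k:ℕ), P (E1 l k ∪ E2 l k) :=
          ENNReal.tsum_le_tsum (fun l => measure_iUnion_le _)
      _ ≤ ∑' (l:Λ), ∑' (k:ℕ), 2 * ENNReal.ofReal (δ / (2*L) * ((6 + (k:ℝ)/4)⁻¹)^2) :=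
          ENNReal.tsum_le_tsum (fun l => ENNReal.tsum_le_tsum (fun k => hbound l k))
      _ = ∑' (l:Λ), 2 * ∑' (k:ℕ), ENNReal.ofReal (δ / (2*L) * ((6 + (k:ℝ)/4)⁻¹)^2) := by
          congr 1
          funext l
          rw [ENNReal.tsum_mul_left]
      _ ≤ ∑' (l:Λ), 2 * ENNReal.ofReal (δ / (2*L)) :=
          ENNReal.tsum_le_tsum (fun l => mul_le_mul_right htsum 2)
      _ = (Fintype.card Λ : ℝ≥0∞) * (2 * ENNReal.ofReal (δ / (2*L))) := by
          rw [tsum_fintype]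
          rw [Finset.sum_const, Finset.card_univ, nsmul_eq_mul]
      _ ≤ ENNReal.ofReal δ := by
          have hcard : (Fintype.card Λ : ℝ≥0∞) = ENNReal.ofReal L := by
            rw [hL, ENNReal.ofReal_natCast]
          rw [hcard, show (2:ℝ≥0∞) = ENNReal.ofReal 2 from (ENNReal.ofReal_ofNat 2).symm,
            ← ENNReal.ofReal_mul (by norm_num), ← ENNReal.ofReal_mul hLpos.le]
          apply ENNReal.ofReal_le_ofReal
          rw [show L * (2 * (δ / (2*L))) = δ * (L / L) by ring, div_self hLpos.ne', mul_one]
  -- inclusion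
  have hsubset : Badᶜ ⊆ {ω | ∀ l, ∀ t, t₀ ≤ t →
      |M l t ω| < Real.sqrt (3 * V t * (2 * Real.log (Real.log (3 * V t)) + Real.log x))} := by
    intro ω hω
    rw [hBad, Set.mem_compl_iff] at hω
    simp only [Set.mem_iUnion, not_exists, Set.mem_union, not_or] at hω
    intro l t ht
    have hVt : V t₀ ≤ V t := hVmono ht
    -- choose the epoch k
    have hex : ∃ k : ℕ, V t < V t₀ * (3/2)^k := by
      obtain ⟨k, hk⟩ := pow_unbounded_of_one_lt (V t / V t₀) (by norm_num : (1:ℝ) < 3/2)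
      exact ⟨k, by rw [div_lt_iff₀ hVt₀pos] at hk; linarith [hk]⟩
    have hk₁0 : Nat.find hex ≠ 0 := by
      intro h0
      have := Nat.find_spec hex
      rw [h0] at this
      simp only [pow_zero, mul_one] at this
      linarith
    obtain ⟨k, hkk⟩ : ∃ k, Nat.find hex = k + 1 :=
      ⟨Nat.find hex - 1, (Nat.succ_pred_eq_of_pos (Nat.pos_of_ne_zero hk₁0)).symm⟩
    have hlow : b k ≤ V t := by
      have := Nat.find_min hex (by omega : k < Nat.find hex)
      rw [hbdef]
      simpa using not_lt.1 this
    have hupp : V t ≤ 3/2 * b k := by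
      have hspec := Nat.find_spec hex
      rw [hkk, pow_succ] at hspec
      rw [hbdef]
      simp only
      nlinarith [hspec]
    have h1 : ¬ (∃ t', V t' ≤ 3/2 * b k ∧ A k ≤ M l t' ω) := by
      have := (hω l k).1
      rw [hE1] at this
      simpa using this
    have h2 : ¬ (∃ t', V t' ≤ 3/2 * b k ∧ A k ≤ (-(M l)) t' ω) := by
      have := (hω l k).2
      rw [hE2] at this
      simpa using this
    push_neg at h1 h2
    have hub1 : M l t ω < A k := h1 t hupp
    have hub2 : -(M l t ω) < A k := by
      have := h2 t hupp
      simpa using this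
    have habs : |M l t ω| < A k := abs_lt.2 ⟨by linarith, hub1⟩
    refine habs.trans_le ?_
    rw [hA]
    apply Real.sqrt_le_sqrt
    have h3b : (0:ℝ) < 3 * b k := by linarith [hbpos k]
    have h3V : 3 * b k ≤ 3 * V t := by linarith
    have hlogmono : Real.log (3 * b k) ≤ Real.log (3 * V t) := Real.log_le_log h3b h3V
    have hloglogmono : Real.log (Real.log (3 * b k)) ≤ Real.log (Real.log (3 * V t)) :=
      Real.log_le_log (hwpos k) hlogmono
    have hinn2 : 2 * Real.log (Real.log (3 * b k)) + Real.log x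
        ≤ 2 * Real.log (Real.log (3 * V t)) + Real.log x := by linarith
    exact mul_le_mul h3V hinn2 (hinn_nn k) (by linarith)
  -- conclusion
  calc (1:ℝ≥0∞) - ENNReal.ofReal δ ≤ 1 - P Bad := tsub_le_tsub_left hPBad 1
    _ = P Badᶜ := by
        rw [measure_compl hmeasBad (measure_ne_top P Bad), measure_univ]
    _ ≤ P _ := measure_mono hsubset

end LILProof
end

section
/- Setting: (Ω, 𝒜, P) is a probability space with filtration (F_n)_{n≥0}; p ∈ (0,1]; Λ is a finite nonempty index set with L = |Λ|; F : Λ → [0,1]; for each λ ∈ Λ, (Z_n(λ))_{n≥1} are random variables with Z_n(λ) F_n-measurable, 0 ≤ Z_n(λ) ≤ 1/p almost surely, and E[Z_n(λ) | F_{n−1}] = F(λ) almost surely for all n ≥ 1. Define F̂(λ, n) = (1/n) Σ_{u=1}^n Z_u(λ), c = 1/p², ψ(N, δ) = sqrt( (3c/N) ( 2 log log(3cN) + log(2L/δ) ) ), and n_0(δ) = min{u ≥ 1 : c·u ≥ 173 log(4L/δ)}. Then for every δ ∈ (0,1): P( ∃ n ≥ n_0(δ), ∃ λ ∈ Λ :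 |F̂(λ, n) − F(λ)| ≥ ψ(n, δ) ) ≤ δ. -/
open MeasureTheory ProbabilityTheory ENNReal


lemma ineq1 (r t : ℝ) (hr0 : 0 ≤ r) (hr1 : r ≤ 1) (ht : 0 ≤ t) :
    r * (1 - r) * (Real.exp t - 1) ≤ t / 2 * ((1 - r) + r * Real.exp t) := by
  set u := Real.exp t with hu
  have hu1 : 1 ≤ u := Real.one_le_exp ht
  rcases le_or_gt (2 * (1 - r)) t with hcase | hcase
  · nlinarith [mul_nonneg (mul_nonneg hr0 (by linarith : (0:ℝ) ≤ 1 - r)) (by linarith : (0:ℝ) ≤ u - 1),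
      mul_nonneg (mul_nonneg (by linarith : (0:ℝ) ≤ t/2 - (1-r)) hr0) (by linarith : (0:ℝ) ≤ u),
      mul_nonneg (by linarith : (0:ℝ) ≤ t/2) (by linarith : (0:ℝ) ≤ 1 - r)]
  · set v : ℝ := 1 - t / 2 with hv
    have hrv : r ≤ v := by simp only [hv]; linarith
    have hv1 : v ≤ 1 := by simp only [hv]; linarith
    have hvexp : v ≤ Real.exp (-(t/2)) := by
      have := Real.add_one_le_exp (-(t/2)); simp only [hv]; linarith
    have hv0 : 0 ≤ v := le_trans hr0 hrv
    have huv : u * v ^ 2 ≤ 1 := by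
      calc u * v ^ 2 ≤ u * Real.exp (-t) := by
            refine mul_le_mul_of_nonneg_left ?_ (Real.exp_pos t).le
            calc v ^ 2 ≤ Real.exp (-(t/2)) ^ 2 := pow_le_pow_left₀ hv0 hvexp 2
              _ = Real.exp (-t) := by rw [← Real.exp_nat_mul]; ring_nf
        _ = 1 := by rw [hu, ← Real.exp_add]; simp
    have key : u * r * (v - r) ≤ (1-v)*(1-r) + r*(1-r) := by
      nlinarith [mul_nonneg (mul_nonneg hr0 (sub_nonneg.2 hrv)) (sub_nonneg.2 huv),
        sq_nonneg (v - r), sq_nonneg (1 - v), mul_nonneg hr0 (sub_nonneg.2 hrv),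
        mul_nonneg (sub_nonneg.2 hrv) (sub_nonneg.2 hv1),
        mul_nonneg (mul_nonneg hr0 hr0) (sub_nonneg.2 hv1)]
    have ht2 : t / 2 = 1 - v := by simp [hv]
    rw [ht2]
    nlinarith [key]



lemma key_ineq (q x : ℝ) (hq0 : 0 ≤ q) (hq1 : q ≤ 1) :
    1 + q * (Real.exp x - 1) ≤ Real.exp (q * x + x ^ 2 / 4) := by
  rcases eq_or_lt_of_le hq1 with rfl | hq1'
  · simp only [one_mul]
    have : Real.exp x ≤ Real.exp (x + x^2/4) :=
      Real.exp_le_exp.2 (by nlinarith [sq_nonneg x])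
    linarith
  · -- q < 1
    set D : ℝ → ℝ := fun y => 1 - q + q * Real.exp y with hD
    have hDpos : ∀ y, 0 < D y := fun y => by
      have := Real.exp_pos y
      have : 0 ≤ q * Real.exp y := mul_nonneg hq0 this.le
      simp only [hD]; linarith
    set φ : ℝ → ℝ := fun y => q * y + y ^ 2 / 4 - Real.log (D y) with hφ
    have hder : ∀ y, HasDerivAt φ (q + y / 2 - q * Real.exp y / D y) y := by
      intro y
      have hD' : HasDerivAt D (q * Real.exp y) y :=
        ((Real.hasDerivAt_exp y).const_mul q).const_add (1 - q)
      have hlog : HasDerivAt (fun y => Real.log (D y)) (q * Real.exp y / D y) y :=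
        hD'.log (hDpos y).ne'
      have hpoly : HasDerivAt (fun y => q * y + y ^ 2 / 4) (q + y / 2) y := by
        have h1 : HasDerivAt (fun y : ℝ => q * y) (q * 1) y := (hasDerivAt_id y).const_mul q
        have h2 : HasDerivAt (fun y : ℝ => y ^ 2 / 4) ((2 : ℕ) * y ^ 1 / 4) y :=
          (hasDerivAt_pow 2 y).div_const 4
        exact (h1.add h2).congr_deriv (by push_cast; ring)
      exact hpoly.sub hlog
    have hdiff : Differentiable ℝ φ := fun y => (hder y).differentiableAt
    have hφ0 : φ 0 = 0 := by simp [hφ, hD]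
    have hnonneg : ∀ y, 0 ≤ y → 0 ≤ φ y := by
      intro y hy
      have hmono : MonotoneOn φ (Set.Ici 0) := by
        refine monotoneOn_of_deriv_nonneg (convex_Ici 0) hdiff.continuous.continuousOn hdiff.differentiableOn ?_
        intro z hz
        rw [(hder z).deriv]
        rw [interior_Ici] at hz
        have hz0 : (0:ℝ) ≤ z := le_of_lt hz
        have h1 := ineq1 q z hq0 hq1 hz0
        rw [sub_nonneg, div_le_iff₀ (hDpos z)]
        simp only [hD]
        nlinarith [h1]
      have := hmono (Set.self_mem_Ici) (Set.mem_Ici.2 hy) hy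
      linarith [hφ0 ▸ this]
    have hnonneg' : ∀ y, y ≤ 0 → 0 ≤ φ y := by
      intro y hy
      have hanti : AntitoneOn φ (Set.Iic 0) := by
        refine antitoneOn_of_deriv_nonpos (convex_Iic 0) hdiff.continuous.continuousOn hdiff.differentiableOn ?_
        intro z hz
        rw [(hder z).deriv]
        rw [interior_Iic] at hz
        have hz0 : z ≤ 0 := le_of_lt hz
        have h1 := ineq1 (1 - q) (-z) (by linarith) (by linarith) (by linarith)
        have hez : Real.exp z * Real.exp (-z) = 1 := by rw [← Real.exp_add]; simp
        have h2 := mul_le_mul_of_nonneg_left h1 (Real.exp_pos z).le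
        have e1 : z * q * (Real.exp z * Real.exp (-z)) = z * q := by rw [hez]; ring
        have e2 : z * (1 - q) * (Real.exp z * Real.exp (-z)) = z * (1 - q) := by
          rw [hez]; ring
        have e3 : q * (1 - q) * (Real.exp z * Real.exp (-z)) = q * (1 - q) := by
          rw [hez]; ring
        rw [sub_nonpos, le_div_iff₀ (hDpos z)]
        simp only [hD]
        nlinarith [h2, e1, e2, e3]
      have := hanti (Set.mem_Iic.2 hy) (Set.self_mem_Iic) hy
      linarith [hφ0 ▸ this]
    have hphi : 0 ≤ φ x := by
      rcases le_total 0 x with h | h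
      · exact hnonneg x h
      · exact hnonneg' x h
    have hlogle : Real.log (D x) ≤ q * x + x ^ 2 / 4 := by
      simp only [hφ] at hphi; linarith
    have := Real.exp_log (hDpos x)
    calc 1 + q * (Real.exp x - 1) = D x := by simp only [hD]; ring
      _ = Real.exp (Real.log (D x)) := this.symm
      _ ≤ Real.exp (q * x + x ^ 2 / 4) := Real.exp_le_exp.2 hlogle


lemma cube_bound (x : ℝ) (hx : 0 ≤ x) : 3*((x+8)*(x+9)) ≤ ((9+x)*(0.6931:ℝ))^(3:ℕ) := by
  nlinarith [pow_nonneg hx 2, sq_nonneg x, hx, mul_nonneg hx hx, mul_nonneg (mul_nonneg hx hx) hx]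

lemma tel_hasSum : HasSum (fun k : ℕ => (1:ℝ)/(((k:ℝ)+8)*((k:ℝ)+9))) (1/8) := by
  have heq : (fun k : ℕ => (1:ℝ)/(((k:ℝ)+8)*((k:ℝ)+9)))
      = fun k : ℕ => (fun i : ℕ => (1:ℝ)/((i:ℝ)+8)) k - (fun i : ℕ => (1:ℝ)/((i:ℝ)+8)) (k+1) := by
    funext k
    have h8 : ((k:ℝ)+8) ≠ 0 := by positivity
    have h9 : ((k:ℝ)+1+8) ≠ 0 := by positivity
    simp only
    push_cast
    rw [div_sub_div _ _ h8 h9]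
    rw [div_eq_div_iff (by positivity) (by positivity)]
    ring
  rw [heq]
  rw [hasSum_iff_tendsto_nat_of_nonneg]
  · have hps : (fun n : ℕ => ∑ i ∈ Finset.range n,
        ((fun i : ℕ => (1:ℝ)/((i:ℝ)+8)) i - (fun i : ℕ => (1:ℝ)/((i:ℝ)+8)) (i+1)))
        = fun n : ℕ => 1/8 - 1/((n:ℝ)+8) := by
      funext n
      rw [Finset.sum_range_sub' (fun i : ℕ => (1:ℝ)/((i:ℝ)+8)) n]
      norm_num
    rw [hps]
    have h0 : Filter.Tendsto (fun n : ℕ => 1/((n:ℝ)+8)) Filter.atTop (nhds 0) := by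
      simp only [one_div]
      exact Filter.Tendsto.comp tendsto_inv_atTop_zero
        (Filter.tendsto_atTop_add_const_right _ 8 tendsto_natCast_atTop_atTop)
    have := Filter.Tendsto.sub (tendsto_const_nhds (x := (1/8 : ℝ))) h0
    simpa using this
  · intro i
    simp only
    push_cast
    rw [sub_nonneg]
    gcongr
    linarith



theorem doob_exp_bound_s5 {Ω : Type*} [m : MeasurableSpace Ω] (P : Measure Ω)
    [IsProbabilityMeasure P]
    (ℱ : Filtration ℕ m) (p : ℝ) (hp0 : 0 < p) (hp1 : p ≤ 1)
    (F0 : ℝ) (hF00 : 0 ≤ F0) (hF01 : F0 ≤ 1)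
    (Z1 : ℕ → Ω → ℝ)
    (hmeas : ∀ n, 1 ≤ n → StronglyMeasurable[ℱ n] (Z1 n))
    (hbdd : ∀ n, 1 ≤ n → ∀ᵐ ω ∂P, 0 ≤ Z1 n ω ∧ Z1 n ω ≤ 1 / p)
    (hcond : ∀ n, 1 ≤ n → P[Z1 n | ℱ (n - 1)] =ᵐ[P] fun _ => F0)
    (s r : ℝ) (N : ℕ) :
    P {ω | ∃ n, n ≤ N ∧ r ≤ s * ∑ u ∈ Finset.Icc 1 n, (Z1 u ω - F0)}
      ≤ ENNReal.ofReal (Real.exp ((N : ℝ) * (s ^ 2 * (1 / p ^ 2) / 4) - r)) := by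
  set K : ℝ := Real.exp (s ^ 2 * (1 / p ^ 2) / 4) with hK
  have hKpos : 0 < K := Real.exp_pos _
  set S : ℕ → Ω → ℝ := fun n ω => ∑ u ∈ Finset.Icc 1 n, (Z1 u ω - F0) with hS
  set g : ℕ → Ω → ℝ := fun n ω => Real.exp (s * S n ω) with hg
  -- integrability of Z
  have hZint : ∀ n, 1 ≤ n → Integrable (Z1 n) P := by
    intro n hn
    refine ⟨((hmeas n hn).mono (ℱ.le n)).aestronglyMeasurable, ?_⟩
    refine HasFiniteIntegral.of_bounded (C := 1 / p) ?_
    filter_upwards [hbdd n hn] with ω hω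
    rw [Real.norm_eq_abs, abs_le]
    constructor <;> [linarith [hω.1, hω.2, one_div_nonneg.2 hp0.le]; exact hω.2]
  -- measurability of S and g
  have hSmeas : ∀ n, StronglyMeasurable[ℱ n] (S n) := by
    intro n
    apply Finset.stronglyMeasurable_fun_sum
    intro u hu
    rcases Finset.mem_Icc.1 hu with ⟨hu1, hu2⟩
    exact ((hmeas u hu1).mono (ℱ.mono hu2)).sub stronglyMeasurable_const
  have hgmeas : ∀ n, StronglyMeasurable[ℱ n] (g n) := fun n =>
    Real.continuous_exp.comp_stronglyMeasurable ((hSmeas n).const_mul s)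
  -- a.e. bounds on S and g
  have hSbdd : ∀ n, ∀ᵐ ω ∂P, |S n ω| ≤ n * (1 / p + 1) := by
    intro n
    have hae : ∀ᵐ ω ∂P, ∀ u : ℕ, 1 ≤ u → 0 ≤ Z1 u ω ∧ Z1 u ω ≤ 1 / p := by
      rw [ae_all_iff]
      intro u
      rcases le_or_gt 1 u with hu | hu
      · filter_upwards [hbdd u hu] with ω hω _; exact hω
      · exact Filter.Eventually.of_forall fun ω h' => absurd h' (by omega)
    filter_upwards [hae] with ω hω'
    have hω : ∀ u ∈ Finset.Icc 1 n, 0 ≤ Z1 u ω ∧ Z1 u ω ≤ 1 / p :=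
      fun u hu => hω' u (Finset.mem_Icc.1 hu).1
    calc |S n ω| ≤ ∑ u ∈ Finset.Icc 1 n, |Z1 u ω - F0| := Finset.abs_sum_le_sum_abs _ _
      _ ≤ ∑ _u ∈ Finset.Icc 1 n, (1 / p + 1) := by
          refine Finset.sum_le_sum fun u hu => ?_
          rcases hω u hu with ⟨h0, h1⟩
          rw [abs_le]
          constructor <;> [linarith [one_div_nonneg.2 hp0.le]; linarith]
      _ = n * (1 / p + 1) := by
          rw [Finset.sum_const, Nat.card_Icc]
          simp only [nsmul_eq_mul, Nat.add_sub_cancel]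
          try push_cast
          try ring
  have hgbdd : ∀ n, ∀ᵐ ω ∂P, ‖g n ω‖ ≤ Real.exp (|s| * (n * (1 / p + 1))) := by
    intro n
    filter_upwards [hSbdd n] with ω hω
    rw [Real.norm_eq_abs, Real.abs_exp, Real.exp_le_exp]
    calc s * S n ω ≤ |s * S n ω| := le_abs_self _
      _ = |s| * |S n ω| := abs_mul _ _
      _ ≤ |s| * (n * (1 / p + 1)) := by
          exact mul_le_mul_of_nonneg_left hω (abs_nonneg s)
  have hgint : ∀ n, Integrable (g n) P := fun n =>
    ⟨((hgmeas n).mono (ℱ.le n)).aestronglyMeasurable,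
      HasFiniteIntegral.of_bounded (hgbdd n)⟩
  -- the single-step factor
  set e : ℕ → Ω → ℝ := fun i ω => Real.exp (s * (Z1 (i + 1) ω - F0)) with he
  have heint : ∀ i, Integrable (e i) P := by
    intro i
    refine ⟨(Real.continuous_exp.comp_stronglyMeasurable
      ((((hmeas (i+1) (Nat.le_add_left 1 i)).mono (ℱ.le (i+1))).sub
        stronglyMeasurable_const).const_mul s)).aestronglyMeasurable, ?_⟩
    refine HasFiniteIntegral.of_bounded (C := Real.exp (|s| * (1 / p + 1))) ?_
    filter_upwards [hbdd (i+1) (Nat.le_add_left 1 i)] with ω hω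
    rw [Real.norm_eq_abs, Real.abs_exp, Real.exp_le_exp]
    calc s * (Z1 (i+1) ω - F0) ≤ |s| * |Z1 (i+1) ω - F0| := by
          rw [← abs_mul]; exact le_abs_self _
      _ ≤ |s| * (1 / p + 1) := by
          refine mul_le_mul_of_nonneg_left ?_ (abs_nonneg s)
          rw [abs_le]
          constructor <;> [linarith [one_div_nonneg.2 hp0.le, hω.1]; linarith [hω.2]]
  -- conditional expectation of affine functions of Z1 (i+1)
  have hcond' : ∀ i : ℕ, P[Z1 (i+1) | ℱ i] =ᵐ[P] fun _ => F0 := by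
    intro i
    have := hcond (i+1) (Nat.le_add_left 1 i)
    simpa using this
  have haff : ∀ (i : ℕ) (a b : ℝ),
      P[(fun ω => a + b * Z1 (i+1) ω) | ℱ i] =ᵐ[P] fun _ => a + b * F0 := by
    intro i a b
    have hrw : (fun ω => a + b * Z1 (i+1) ω) = (fun _ => a) + b • Z1 (i+1) := by
      funext ω; simp [smul_eq_mul]
    rw [hrw]
    calc P[(fun _ => a) + b • Z1 (i+1) | ℱ i]
        =ᵐ[P] P[(fun _ => a) | ℱ i] + P[b • Z1 (i+1) | ℱ i] :=
          condExp_add (integrable_const a) ((hZint (i+1) (Nat.le_add_left 1 i)).smul b) _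
      _ =ᵐ[P] (fun _ => a) + b • P[Z1 (i+1) | ℱ i] :=
          Filter.EventuallyEq.add
            (Filter.EventuallyEq.of_eq (condExp_const (ℱ.le i) a))
            (condExp_smul b (Z1 (i+1)) _)
      _ =ᵐ[P] fun _ => a + b * F0 := by
          filter_upwards [hcond' i] with ω hω
          simp [hω, smul_eq_mul]
  -- one-step upper bound
  have hstep_le : ∀ i : ℕ, P[e i | ℱ i] ≤ᵐ[P] fun _ => K := by
    intro i
    set A : ℝ := Real.exp (-(s * F0)) with hA
    set Kc : ℝ := A * (p * (Real.exp (s * (1 / p)) - 1)) with hKc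
    have hchord : ∀ᵐ ω ∂P, e i ω ≤ A + Kc * Z1 (i+1) ω := by
      filter_upwards [hbdd (i+1) (Nat.le_add_left 1 i)] with ω hω
      rcases hω with ⟨h0, h1⟩
      set t : ℝ := p * Z1 (i+1) ω with ht
      have ht0 : 0 ≤ t := mul_nonneg hp0.le h0
      have ht1 : t ≤ 1 := by
        rw [ht]
        calc p * Z1 (i+1) ω ≤ p * (1 / p) := mul_le_mul_of_nonneg_left h1 hp0.le
          _ = 1 := by field_simp
      have hconv := convexOn_exp.2 (Set.mem_univ (0:ℝ)) (Set.mem_univ (s * (1/p)))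
        (by linarith : (0:ℝ) ≤ 1 - t) ht0 (by ring)
      have htB : t * (s * (1/p)) = s * Z1 (i+1) ω := by
        rw [ht]; field_simp
      have hchord1 : Real.exp (s * Z1 (i+1) ω) ≤ 1 + t * (Real.exp (s * (1/p)) - 1) := by
        have h2 : (1 - t) • (0:ℝ) + t • (s * (1/p)) = s * Z1 (i+1) ω := by
          simp only [smul_eq_mul, mul_zero, zero_add]; exact htB
        rw [h2] at hconv
        simp only [smul_eq_mul, Real.exp_zero, mul_one] at hconv
        linarith
      have hexp : e i ω = A * Real.exp (s * Z1 (i+1) ω) := by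
        simp only [he, hA, ← Real.exp_add]
        try (congr 1; ring)
      rw [hexp, hKc]
      have hApos : 0 < A := Real.exp_pos _
      calc A * Real.exp (s * Z1 (i+1) ω) ≤ A * (1 + t * (Real.exp (s * (1/p)) - 1)) :=
            mul_le_mul_of_nonneg_left hchord1 hApos.le
        _ = A + A * (p * (Real.exp (s * (1/p)) - 1)) * Z1 (i+1) ω := by rw [ht]; ring
    have hchord_int : Integrable (fun ω => A + Kc * Z1 (i+1) ω) P := by
      have := (hZint (i+1) (Nat.le_add_left 1 i)).const_mul Kc
      exact (integrable_const A).add this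
    have h1 : P[e i | ℱ i] ≤ᵐ[P] P[(fun ω => A + Kc * Z1 (i+1) ω) | ℱ i] :=
      condExp_mono (heint i) hchord_int hchord
    have h2 := haff i A Kc
    have h3 : A + Kc * F0 ≤ K := by
      have hq0 : 0 ≤ p * F0 := mul_nonneg hp0.le hF00
      have hq1 : p * F0 ≤ 1 := by nlinarith
      have hkey := key_ineq (p * F0) (s * (1/p)) hq0 hq1
      have hx2 : (s * (1/p)) ^ 2 / 4 = s ^ 2 * (1 / p ^ 2) / 4 := by
        field_simp
        try ring
      have hqx : p * F0 * (s * (1/p)) = s * F0 := by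
        field_simp
        try ring
      calc A + Kc * F0 = A * (1 + (p * F0) * (Real.exp (s * (1/p)) - 1)) := by
            rw [hA, hKc]; ring
        _ ≤ A * Real.exp ((p * F0) * (s * (1/p)) + (s * (1/p)) ^ 2 / 4) :=
            mul_le_mul_of_nonneg_left hkey (Real.exp_pos _).le
        _ = K := by
            rw [hA, ← Real.exp_add, hqx, hx2, hK]; ring_nf
    calc P[e i | ℱ i] ≤ᵐ[P] P[(fun ω => A + Kc * Z1 (i+1) ω) | ℱ i] := h1
      _ =ᵐ[P] fun _ => A + Kc * F0 := h2
      _ ≤ᵐ[P] fun _ => K := Filter.Eventually.of_forall fun _ => h3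
  -- one-step lower bound
  have hstep_ge : ∀ i : ℕ, (fun _ => (1:ℝ)) ≤ᵐ[P] P[e i | ℱ i] := by
    intro i
    have hlb : ∀ᵐ ω ∂P, (1 - s * F0) + s * Z1 (i+1) ω ≤ e i ω := by
      refine Filter.Eventually.of_forall fun ω => ?_
      have := Real.add_one_le_exp (s * (Z1 (i+1) ω - F0))
      rw [he]; nlinarith [this]
    have hlb_int : Integrable (fun ω => (1 - s * F0) + s * Z1 (i+1) ω) P :=
      (integrable_const _).add ((hZint (i+1) (Nat.le_add_left 1 i)).const_mul s)
    have h1 : P[(fun ω => (1 - s * F0) + s * Z1 (i+1) ω) | ℱ i] ≤ᵐ[P] P[e i | ℱ i] :=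
      condExp_mono hlb_int (heint i) hlb
    have h2 := haff i (1 - s * F0) s
    have : (1 - s * F0) + s * F0 = 1 := by ring
    have h2' : (fun _ : Ω => (1:ℝ)) =ᵐ[P] P[(fun ω => (1 - s * F0) + s * Z1 (i+1) ω) | ℱ i] := by
      have heq : (fun _ : Ω => (1:ℝ)) = fun _ : Ω => (1 - s * F0) + s * F0 := by
        funext; ring
      rw [heq]; exact h2.symm
    exact h2'.le.trans h1
  -- decomposition g (i+1) = g i * e i
  have hgsucc : ∀ i : ℕ, g (i + 1) = g i * e i := by
    intro i
    funext ω
    have hsum : S (i+1) ω = S i ω + (Z1 (i+1) ω - F0) := by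
      rw [hS]
      exact Finset.sum_Icc_succ_top (Nat.le_add_left 1 i) _
    simp only [hg, Pi.mul_apply, he]
    rw [hsum, ← Real.exp_add]; ring_nf
  -- pull-out property
  have hpull : ∀ i : ℕ, P[g (i+1) | ℱ i] =ᵐ[P] g i * P[e i | ℱ i] := by
    intro i
    rw [hgsucc i]
    exact condExp_stronglyMeasurable_mul_of_bound (ℱ.le i) (hgmeas i) (heint i)
      (Real.exp (|s| * (i * (1 / p + 1)))) (hgbdd i)
  -- submartingale
  have hsub : Submartingale g ℱ P := by
    refine submartingale_nat (fun n => hgmeas n) hgint ?_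
    intro i
    have h1 := hpull i
    have h2 := hstep_ge i
    filter_upwards [h1, h2] with ω hω1 hω2
    rw [hω1]
    have hgpos : 0 ≤ g i ω := (Real.exp_pos _).le
    calc g i ω = g i ω * 1 := by ring
      _ ≤ g i ω * (P[e i | ℱ i]) ω := mul_le_mul_of_nonneg_left hω2 hgpos
  -- integral bound by induction
  have hInt : ∀ n : ℕ, ∫ ω, g n ω ∂P ≤ K ^ n := by
    intro n
    induction n with
    | zero =>
      have : g 0 = fun _ => 1 := by
        funext ω; simp [hg, hS, Finset.Icc_eq_empty (by omega : ¬ (1:ℕ) ≤ 0)]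
      rw [this]
      simp
    | succ n ih =>
      have h1 : ∫ ω, g (n+1) ω ∂P = ∫ ω, (P[g (n+1) | ℱ n]) ω ∂P :=
        (integral_condExp (ℱ.le n)).symm
      have h2 : ∫ ω, (P[g (n+1) | ℱ n]) ω ∂P = ∫ ω, g n ω * (P[e n | ℱ n]) ω ∂P :=
        integral_congr_ae (hpull n)
      have h3 : ∫ ω, g n ω * (P[e n | ℱ n]) ω ∂P ≤ ∫ ω, g n ω * K ∂P := by
        refine integral_mono_ae (Integrable.congr integrable_condExp (hpull n)) 
          ((hgint n).mul_const K) ?_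
        filter_upwards [hstep_le n] with ω hω
        exact mul_le_mul_of_nonneg_left hω (Real.exp_pos _).le
      have h4 : ∫ ω, g n ω * K ∂P = (∫ ω, g n ω ∂P) * K := integral_mul_const K _
      calc ∫ ω, g (n+1) ω ∂P = ∫ ω, g n ω * (P[e n | ℱ n]) ω ∂P := h1.trans h2
        _ ≤ ∫ ω, g n ω * K ∂P := h3
        _ = (∫ ω, g n ω ∂P) * K := h4
        _ ≤ K ^ n * K := mul_le_mul_of_nonneg_right ih hKpos.le
        _ = K ^ (n + 1) := by ring
  -- Doob's maximal inequality
  set ε : NNReal := Real.toNNReal (Real.exp r) with hε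
  have hεR : (ε : ℝ) = Real.exp r := Real.coe_toNNReal _ (Real.exp_pos r).le
  set Aset : Set Ω :=
    {ω | (ε : ℝ) ≤ (Finset.range (N + 1)).sup' Finset.nonempty_range_add_one fun k => g k ω}
    with hAset
  have hsubset : {ω | ∃ n, n ≤ N ∧ r ≤ s * S n ω} ⊆ Aset := by
    intro ω hω
    rcases hω with ⟨n, hnN, hrn⟩
    rw [hAset, Set.mem_setOf_eq, hεR]
    calc Real.exp r ≤ Real.exp (s * S n ω) := Real.exp_le_exp.2 hrn
      _ = g n ω := rfl
      _ ≤ _ := Finset.le_sup' (fun k => g k ω) (Finset.mem_range.2 (by omega))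
  have hmax := maximal_ineq hsub (fun n ω => (Real.exp_pos _).le) (ε := ε) N
  have hsetint : ∫ ω in Aset, g N ω ∂P ≤ ∫ ω, g N ω ∂P := by
    refine setIntegral_le_integral (hgint N) ?_
    exact Filter.Eventually.of_forall fun ω => (Real.exp_pos _).le
  have hPA : (ε : ℝ≥0∞) * P Aset ≤ ENNReal.ofReal (K ^ N) := by
    calc (ε : ℝ≥0∞) * P Aset = ε • P Aset := by simp [ENNReal.smul_def]
      _ ≤ ENNReal.ofReal (∫ ω in Aset, g N ω ∂P) := hmax
      _ ≤ ENNReal.ofReal (K ^ N) :=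
          ENNReal.ofReal_le_ofReal (hsetint.trans (hInt N))
  have hεne : (ε : ℝ≥0∞) ≠ 0 := by
    simp only [ne_eq, ENNReal.coe_eq_zero]
    rw [hε]
    simp [Real.toNNReal_eq_zero, not_le, Real.exp_pos r]
  have hεtop : (ε : ℝ≥0∞) ≠ ⊤ := ENNReal.coe_ne_top
  have hPA2 : P Aset ≤ ENNReal.ofReal (K ^ N) / (ε : ℝ≥0∞) := by
    rw [ENNReal.le_div_iff_mul_le (Or.inl hεne) (Or.inl hεtop), mul_comm]
    exact hPA
  have hεofReal : (ε : ℝ≥0∞) = ENNReal.ofReal (Real.exp r) := by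
    rw [hε, ENNReal.ofReal]
  have hfinal : ENNReal.ofReal (K ^ N) / (ε : ℝ≥0∞)
      = ENNReal.ofReal (Real.exp ((N : ℝ) * (s ^ 2 * (1 / p ^ 2) / 4) - r)) := by
    rw [hεofReal, ← ENNReal.ofReal_div_of_pos (Real.exp_pos r)]
    congr 1
    rw [hK, ← Real.exp_nat_mul, ← Real.exp_sub]
  calc P {ω | ∃ n, n ≤ N ∧ r ≤ s * S n ω} ≤ P Aset := measure_mono hsubset
    _ ≤ ENNReal.ofReal (K ^ N) / (ε : ℝ≥0∞) := hPA2
    _ = _ := hfinal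



set_option maxHeartbeats 2000000 in
/-- Anytime-valid LIL confidence interval on the false positive rate: for the
the importance-sampled indicators `Z l n ∈ [0, 1/p]` with conditional mean `F l`,
the empirical mean `F̂(l, n) = (1/n) ∑_{u=1}^n Z l u` deviates from `F l` by at
least the LIL radius `ψ(n, δ)` for some `n ≥ n₀(δ)` and some grid point `l ∈ Λ`
with probability at most `δ`. -/
theorem stmt_5
    {Ω : Type*} [m : MeasurableSpace Ω] (P : Measure Ω) [IsProbabilityMeasure P]
    {Λ : Type*} [Fintype Λ] [Nonempty Λ]
    (ℱ : Filtration ℕ m) (p : ℝ) (hp : p ∈ Set.Ioc (0 : ℝ) 1)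
    (L : ℝ) (hL : L = Fintype.card Λ)
    (F : Λ → ℝ) (hF : ∀ l, F l ∈ Set.Icc (0 : ℝ) 1)
    (Z : Λ → ℕ → Ω → ℝ)
    (hmeas : ∀ l, ∀ n, 1 ≤ n → StronglyMeasurable[ℱ n] (Z l n))
    (hbdd : ∀ l, ∀ n, 1 ≤ n → ∀ᵐ ω ∂P, 0 ≤ Z l n ω ∧ Z l n ω ≤ 1 / p)
    (hcond : ∀ l, ∀ n, 1 ≤ n → P[Z l n | ℱ (n - 1)] =ᵐ[P] fun _ => F l)
    (Fhat : Λ → ℕ → Ω → ℝ)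
    (hFhat : ∀ l n, Fhat l n = fun ω => (1 / (n : ℝ)) * ∑ u ∈ Finset.Icc 1 n, Z l u ω)
    (c : ℝ) (hc : c = 1 / p ^ 2)
    (ψ : ℝ → ℝ → ℝ)
    (hψ : ∀ N δ, ψ N δ =
      Real.sqrt ((3 * c / N) * (2 * Real.log (Real.log (3 * c * N)) + Real.log (2 * L / δ))))
    (δ : ℝ) (hδ : δ ∈ Set.Ioo (0 : ℝ) 1)
    (n₀ : ℕ) (hn₀ : IsLeast {u : ℕ | 1 ≤ u ∧ 173 * Real.log (4 * L / δ) ≤ c * u} n₀) :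
    P {ω | ∃ n, n₀ ≤ n ∧ ∃ l, ψ n δ ≤ |Fhat l n ω - F l|} ≤ ENNReal.ofReal δ := by
  obtain ⟨hp0, hp1⟩ := hp
  obtain ⟨hδ0, hδ1⟩ := hδ
  obtain ⟨⟨hn₀1, hn₀173⟩, _hleast⟩ := hn₀
  have hcard : 0 < Fintype.card Λ := Fintype.card_pos
  have hL1 : (1:ℝ) ≤ L := by rw [hL]; exact_mod_cast hcard
  have hL0 : (0:ℝ) < L := lt_of_lt_of_le zero_lt_one hL1
  have hc0 : 0 < c := by rw [hc]; positivity
  have hlog2 : (0.6931:ℝ) ≤ Real.log 2 := by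
    have := Real.log_two_gt_d9; norm_num at this ⊢; linarith
  set w : ℝ := Real.log (2 * L / δ) with hw
  have hw0 : 0 < w := by
    refine Real.log_pos ?_
    rw [lt_div_iff₀ hδ0]
    nlinarith
  have h4L : Real.log 4 ≤ Real.log (4 * L / δ) := by
    refine Real.log_le_log (by norm_num) ?_
    rw [le_div_iff₀ hδ0]
    nlinarith
  have hlog4 : Real.log 4 = 2 * Real.log 2 := by
    rw [show (4:ℝ) = 2^2 by norm_num, Real.log_pow]
    push_cast; ring
  have hcn0 : (512:ℝ) ≤ 3 * (c * n₀) := by nlinarith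
  -- epoch sizes
  set Nk : ℕ → ℕ := fun k => n₀ * 2^k with hNk
  have hNkpos : ∀ k, 0 < Nk k := fun k => Nat.mul_pos hn₀1 (Nat.pow_pos (by norm_num))
  have hNkR : ∀ k : ℕ, (0:ℝ) < (Nk k : ℝ) := fun k => by exact_mod_cast hNkpos k
  have hNkcast : ∀ k : ℕ, ((Nk k : ℕ) : ℝ) = (n₀:ℝ) * 2^k := by
    intro k
    simp only [hNk]
    push_cast
    try ring
  have h512 : ∀ k : ℕ, (2:ℝ)^(9+k) ≤ 3 * c * (Nk k : ℝ) := by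
    intro k
    rw [hNkcast]
    have h1 : (2:ℝ)^(9+k) = 512 * 2^k := by rw [pow_add]; norm_num
    have h2 : 3 * c * ((n₀:ℝ) * 2^k) = (3 * (c * n₀)) * 2^k := by ring
    rw [h1, h2]
    exact mul_le_mul_of_nonneg_right hcn0 (by positivity)
  set y : ℕ → ℝ := fun k => Real.log (3 * c * (Nk k : ℝ)) with hy
  have hyk : ∀ k : ℕ, ((9:ℝ)+k) * Real.log 2 ≤ y k := by
    intro k
    have h1 : Real.log ((2:ℝ)^(9+k)) ≤ y k := Real.log_le_log (by positivity) (h512 k)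
    rw [Real.log_pow] at h1
    push_cast at h1
    linarith
  have hy1 : ∀ k : ℕ, 1 < y k := by
    intro k
    have h1 := hyk k
    have h2 : (0:ℝ) ≤ k := Nat.cast_nonneg k
    nlinarith
  have hy0 : ∀ k : ℕ, 0 < y k := fun k => lt_trans zero_lt_one (hy1 k)
  -- the threshold function
  set Q : ℝ → ℝ := fun x => 2 * Real.log (Real.log (3 * c * x)) + w with hQ
  have hQk_pos : ∀ k : ℕ, 0 < Q (Nk k : ℝ) := by
    intro k
    have h1 : 0 < Real.log (y k) := Real.log_pos (hy1 k)
    have h2 : Q (Nk k : ℝ) = 2 * Real.log (y k) + w := rfl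
    rw [h2]; linarith
  set a : ℕ → ℝ := fun k => Real.sqrt (3 * c * (Nk k : ℝ) * Q (Nk k : ℝ)) with ha
  have hargpos : ∀ k : ℕ, 0 < 3 * c * (Nk k : ℝ) * Q (Nk k : ℝ) := by
    intro k
    have := hQk_pos k
    have := hNkR k
    positivity
  have hapos : ∀ k, 0 < a k := fun k => Real.sqrt_pos.2 (hargpos k)
  have ha2 : ∀ k, (a k)^2 = 3 * c * (Nk k : ℝ) * Q (Nk k : ℝ) := fun k =>
    Real.sq_sqrt (hargpos k).le
  set sk : ℕ → ℝ := fun k => a k / (c * (Nk k : ℝ)) with hsk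
  have hskpos : ∀ k, 0 < sk k := fun k => div_pos (hapos k) (mul_pos hc0 (hNkR k))
  -- the bad sets
  set A : ℕ → Λ → Bool → Set Ω := fun k l b =>
    {ω | ∃ n, n ≤ 2 * Nk k ∧ sk k * a k ≤
      (if b then sk k else -(sk k)) * ∑ u ∈ Finset.Icc 1 n, (Z l u ω - F l)} with hA
  -- inclusion of the event in the union of bad sets
  have hincl : {ω | ∃ n, n₀ ≤ n ∧ ∃ l, ψ n δ ≤ |Fhat l n ω - F l|} ⊆
      ⋃ (k : ℕ), ⋃ (l : Λ), ⋃ (b : Bool), A k l b := by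
    rintro ω ⟨n, hn, l, hψn⟩
    have hn1 : 1 ≤ n := le_trans hn₀1 hn
    have hnR : (0:ℝ) < (n:ℝ) := by exact_mod_cast hn1
    set k := Nat.log 2 (n / n₀) with hk
    have hlow : Nk k ≤ n := by
      have h1 : 2^k ≤ n / n₀ := Nat.pow_log_le_self 2 (by
        have : 1 ≤ n / n₀ := (Nat.one_le_div_iff (by omega)).2 hn
        omega)
      calc n₀ * 2^k ≤ n₀ * (n / n₀) := Nat.mul_le_mul_left _ h1
        _ ≤ n := Nat.mul_div_le n n₀
    have hhigh : n ≤ 2 * Nk k := by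
      have h1 : n / n₀ < 2^(k+1) := Nat.lt_pow_succ_log_self (by norm_num) _
      have h2 : n < n₀ * 2^(k+1) := by
        have h3 := Nat.div_add_mod n n₀
        have h4 : n % n₀ < n₀ := Nat.mod_lt _ (by omega)
        have h5 : n / n₀ + 1 ≤ 2^(k+1) := h1
        calc n = n₀ * (n / n₀) + n % n₀ := h3.symm
          _ < n₀ * (n / n₀) + n₀ := by omega
          _ = n₀ * (n / n₀ + 1) := by ring
          _ ≤ n₀ * 2^(k+1) := Nat.mul_le_mul_left _ h5
      have h6 : n₀ * 2^(k+1) = 2 * Nk k := by rw [hNk]; ring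
      omega
    -- pass to the reals
    have hS_eq : ∑ u ∈ Finset.Icc 1 n, (Z l u ω - F l) = (n:ℝ) * (Fhat l n ω - F l) := by
      have h1 : Fhat l n ω = (1 / (n : ℝ)) * ∑ u ∈ Finset.Icc 1 n, Z l u ω :=
        congrFun (hFhat l n) ω
      rw [Finset.sum_sub_distrib, Finset.sum_const, Nat.card_Icc, h1]
      have hne : (n:ℝ) ≠ 0 := ne_of_gt hnR
      simp only [Nat.add_sub_cancel, nsmul_eq_mul]
      field_simp
      try ring
    have hQmono : Q (Nk k : ℝ) ≤ Q (n : ℝ) := by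
      have h3c : 3 * c * (Nk k : ℝ) ≤ 3 * c * (n : ℝ) := by
        have h' : ((Nk k : ℕ):ℝ) ≤ (n:ℝ) := by exact_mod_cast hlow
        have h'' : (0:ℝ) ≤ 3 * c := by positivity
        exact mul_le_mul_of_nonneg_left h' h''
      have h1 : Real.log (3 * c * (Nk k : ℝ)) ≤ Real.log (3 * c * (n : ℝ)) :=
        Real.log_le_log (by positivity) h3c
      have h2 : Real.log (Real.log (3 * c * (Nk k : ℝ))) ≤
          Real.log (Real.log (3 * c * (n : ℝ))) :=
        Real.log_le_log (hy0 k) h1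
      simp only [hQ]
      linarith
    have hQn_pos : 0 < Q (n:ℝ) := lt_of_lt_of_le (hQk_pos k) hQmono
    have hψval : ψ (n:ℝ) δ = Real.sqrt ((3 * c / (n:ℝ)) * Q (n:ℝ)) := hψ (n:ℝ) δ
    have hψ_eq : (n:ℝ) * ψ (n:ℝ) δ = Real.sqrt (3 * c * (n:ℝ) * Q (n:ℝ)) := by
      rw [hψval]
      have hne : (n:ℝ) ≠ 0 := ne_of_gt hnR
      have harg : 3 * c * (n:ℝ) * Q (n:ℝ) = (n:ℝ)^2 * ((3 * c / (n:ℝ)) * Q (n:ℝ)) := by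
        field_simp
        try ring
      rw [harg, Real.sqrt_mul (sq_nonneg _), Real.sqrt_sq hnR.le]
    have hak_le : a k ≤ (n:ℝ) * ψ (n:ℝ) δ := by
      rw [hψ_eq, ha]
      refine Real.sqrt_le_sqrt ?_
      have h3c : 3 * c * (Nk k : ℝ) ≤ 3 * c * (n : ℝ) := by
        have h' : ((Nk k : ℕ):ℝ) ≤ (n:ℝ) := by exact_mod_cast hlow
        have h'' : (0:ℝ) ≤ 3 * c := by positivity
        exact mul_le_mul_of_nonneg_left h' h''
      exact mul_le_mul h3c hQmono (hQk_pos k).le (by positivity)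
    have habs : a k ≤ |∑ u ∈ Finset.Icc 1 n, (Z l u ω - F l)| := by
      rw [hS_eq, abs_mul, abs_of_pos hnR]
      calc a k ≤ (n:ℝ) * ψ (n:ℝ) δ := hak_le
        _ ≤ (n:ℝ) * |Fhat l n ω - F l| := mul_le_mul_of_nonneg_left hψn hnR.le
    rcases le_abs.1 habs with hpos | hneg
    · refine Set.mem_iUnion.2 ⟨k, Set.mem_iUnion.2 ⟨l, Set.mem_iUnion.2 ⟨true, ?_⟩⟩⟩
      refine ⟨n, hhigh, ?_⟩
      simp only [if_true]
      exact mul_le_mul_of_nonneg_left hpos (hskpos k).le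
    · refine Set.mem_iUnion.2 ⟨k, Set.mem_iUnion.2 ⟨l, Set.mem_iUnion.2 ⟨false, ?_⟩⟩⟩
      refine ⟨n, hhigh, ?_⟩
      simp only [Bool.false_eq_true, if_false]
      calc sk k * a k ≤ sk k * -(∑ u ∈ Finset.Icc 1 n, (Z l u ω - F l)) :=
            mul_le_mul_of_nonneg_left hneg (hskpos k).le
        _ = -(sk k) * ∑ u ∈ Finset.Icc 1 n, (Z l u ω - F l) := by ring
  -- bound for each bad set
  have hAbound : ∀ (k : ℕ) (l : Λ) (b : Bool),
      P (A k l b) ≤ ENNReal.ofReal (Real.exp (-(3/2) * Q (Nk k : ℝ))) := by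
    intro k l b
    have happ := doob_exp_bound_s5 P ℱ p hp0 hp1 (F l) (hF l).1 (hF l).2 (Z l)
      (hmeas l) (hbdd l) (hcond l) (if b then sk k else -(sk k)) (sk k * a k) (2 * Nk k)
    have hexp_eq : ((2 * Nk k : ℕ) : ℝ) * ((if b then sk k else -(sk k)) ^ 2 * (1 / p ^ 2) / 4)
        - sk k * a k = -(3/2) * Q (Nk k : ℝ) := by
      have hs2 : (if b then sk k else -(sk k))^2 = (sk k)^2 := by cases b <;> simp
      have hcast : ((2 * Nk k : ℕ) : ℝ) = 2 * (Nk k : ℝ) := by push_cast; ring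
      rw [hs2, hcast, ← hc, hsk]
      have hne1 : c * (Nk k : ℝ) ≠ 0 := ne_of_gt (mul_pos hc0 (hNkR k))
      have hne2 : (Nk k : ℝ) ≠ 0 := ne_of_gt (hNkR k)
      have hne3 : c ≠ 0 := ne_of_gt hc0
      have ha2' : (a k)^2 = 3*c*(Nk k:ℝ)*(2 * Real.log (Real.log (3 * c * (Nk k:ℝ))) + w) :=
        ha2 k
      field_simp
      linear_combination (-4) * ha2'
    rw [hA]
    simp only
    calc P {ω | ∃ n, n ≤ 2 * Nk k ∧ sk k * a k ≤
        (if b then sk k else -(sk k)) * ∑ u ∈ Finset.Icc 1 n, (Z l u ω - F l)}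
        ≤ ENNReal.ofReal (Real.exp (((2 * Nk k : ℕ) : ℝ) *
            ((if b then sk k else -(sk k)) ^ 2 * (1 / p ^ 2) / 4) - sk k * a k)) := happ
      _ = ENNReal.ofReal (Real.exp (-(3/2) * Q (Nk k : ℝ))) := by rw [hexp_eq]
  -- numeric bound on the exponential
  have hexp_le : ∀ k : ℕ, Real.exp (-(3/2) * Q (Nk k : ℝ)) ≤
      (δ/(2*L)) * ((1/3) * (1/(((k:ℝ)+8)*((k:ℝ)+9)))) := by
    intro k
    have hsplit : Real.exp (-(3/2) * Q (Nk k : ℝ))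
        = Real.exp (-(3 * Real.log (y k))) * Real.exp (-(3/2) * w) := by
      rw [← Real.exp_add]
      congr 1
      have h2 : Q (Nk k : ℝ) = 2 * Real.log (y k) + w := rfl
      rw [h2]; ring
    have hb1 : Real.exp (-(3 * Real.log (y k))) = ((y k)^(3:ℕ))⁻¹ := by
      rw [Real.exp_neg]
      congr 1
      rw [show (3:ℝ) * Real.log (y k) = ((3:ℕ):ℝ) * Real.log (y k) by norm_num,
        Real.exp_nat_mul, Real.exp_log (hy0 k)]
    have hb2 : Real.exp (-(3/2) * w) ≤ δ/(2*L) := by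
      have h1 : Real.exp (-(3/2) * w) ≤ Real.exp (-w) :=
        Real.exp_le_exp.2 (by linarith)
      have h2 : Real.exp (-w) = δ/(2*L) := by
        rw [Real.exp_neg, hw, Real.exp_log (by positivity)]
        rw [inv_div]
      linarith
    have hb3 : ((y k)^(3:ℕ))⁻¹ ≤ (1/3) * (1/(((k:ℝ)+8)*((k:ℝ)+9))) := by
      have hkc : (0:ℝ) ≤ (k:ℝ) := Nat.cast_nonneg k
      have hcube : 3*(((k:ℝ)+8)*((k:ℝ)+9)) ≤ (y k)^(3:ℕ) := by
        calc 3*(((k:ℝ)+8)*((k:ℝ)+9)) ≤ (((9:ℝ)+k)*(0.6931:ℝ))^(3:ℕ) := cube_bound k hkc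
          _ ≤ (((9:ℝ)+k) * Real.log 2)^(3:ℕ) := by
              refine pow_le_pow_left₀ (by positivity) ?_ 3
              exact mul_le_mul_of_nonneg_left hlog2 (by positivity)
          _ ≤ (y k)^(3:ℕ) := pow_le_pow_left₀ (by positivity) (hyk k) 3
      have hpos1 : (0:ℝ) < 3*(((k:ℝ)+8)*((k:ℝ)+9)) := by positivity
      have h5 : ((y k)^(3:ℕ))⁻¹ ≤ (3*(((k:ℝ)+8)*((k:ℝ)+9)))⁻¹ := by
        exact inv_anti₀ hpos1 hcube
      calc ((y k)^(3:ℕ))⁻¹ ≤ (3*(((k:ℝ)+8)*((k:ℝ)+9)))⁻¹ := h5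
        _ = (1/3) * (1/(((k:ℝ)+8)*((k:ℝ)+9))) := by
            rw [mul_inv]; ring
    calc Real.exp (-(3/2) * Q (Nk k : ℝ))
        = Real.exp (-(3 * Real.log (y k))) * Real.exp (-(3/2) * w) := hsplit
      _ ≤ ((1/3) * (1/(((k:ℝ)+8)*((k:ℝ)+9)))) * (δ/(2*L)) := by
          rw [hb1]
          exact mul_le_mul hb3 hb2 (Real.exp_pos _).le (by positivity)
      _ = (δ/(2*L)) * ((1/3) * (1/(((k:ℝ)+8)*((k:ℝ)+9)))) := by ring
  -- per-epoch union bound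
  have hγ : ∀ k : ℕ, P (⋃ (l : Λ), ⋃ (b : Bool), A k l b) ≤
      ENNReal.ofReal (δ * ((1/3) * (1/(((k:ℝ)+8)*((k:ℝ)+9))))) := by
    intro k
    set β : ℝ := (δ/(2*L)) * ((1/3) * (1/(((k:ℝ)+8)*((k:ℝ)+9)))) with hβ
    have hβ0 : 0 ≤ β := by positivity
    have h2 : ∀ (l : Λ) (b : Bool), P (A k l b) ≤ ENNReal.ofReal β := fun l b =>
      (hAbound k l b).trans (ENNReal.ofReal_le_ofReal (hexp_le k))
    calc P (⋃ (l : Λ), ⋃ (b : Bool), A k l b)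
        ≤ ∑' (l : Λ), P (⋃ (b : Bool), A k l b) := measure_iUnion_le _
      _ ≤ ∑' (l : Λ), ∑' (b : Bool), P (A k l b) :=
          ENNReal.tsum_le_tsum fun l => measure_iUnion_le _
      _ ≤ ∑' (_l : Λ), ∑' (_b : Bool), ENNReal.ofReal β :=
          ENNReal.tsum_le_tsum fun l => ENNReal.tsum_le_tsum fun b => h2 l b
      _ = ∑' (_l : Λ), ENNReal.ofReal (2*β) := by
          refine tsum_congr fun l => ?_
          rw [tsum_bool, ← ENNReal.ofReal_add hβ0 hβ0]
          congr 1
          ring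
      _ = (Fintype.card Λ) * ENNReal.ofReal (2*β) := by
          rw [tsum_fintype, Finset.sum_const, Finset.card_univ, nsmul_eq_mul]
      _ = ENNReal.ofReal ((Fintype.card Λ) * (2*β)) := by
          rw [← ENNReal.ofReal_natCast (Fintype.card Λ), ← ENNReal.ofReal_mul (by positivity)]
      _ = ENNReal.ofReal (δ * ((1/3) * (1/(((k:ℝ)+8)*((k:ℝ)+9))))) := by
          congr 1
          rw [hβ, ← hL]
          have hLne : L ≠ 0 := ne_of_gt hL0
          field_simp
          try ring
  -- summing over epochs
  have hsummable : Summable (fun k : ℕ => δ * ((1/3) * (1/(((k:ℝ)+8)*((k:ℝ)+9))))) :=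
    ((tel_hasSum.mul_left ((1:ℝ)/3)).mul_left δ).summable
  have htsum : (∑' k : ℕ, δ * ((1/3) * (1/(((k:ℝ)+8)*((k:ℝ)+9))))) = δ * ((1/3) * (1/8)) :=
    ((tel_hasSum.mul_left ((1:ℝ)/3)).mul_left δ).tsum_eq
  calc P {ω | ∃ n, n₀ ≤ n ∧ ∃ l, ψ n δ ≤ |Fhat l n ω - F l|}
      ≤ P (⋃ (k : ℕ), ⋃ (l : Λ), ⋃ (b : Bool), A k l b) := measure_mono hincl
    _ ≤ ∑' (k : ℕ), P (⋃ (l : Λ), ⋃ (b : Bool), A k l b) := measure_iUnion_le _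
    _ ≤ ∑' (k : ℕ), ENNReal.ofReal (δ * ((1/3) * (1/(((k:ℝ)+8)*((k:ℝ)+9))))) :=
        ENNReal.tsum_le_tsum hγ
    _ = ENNReal.ofReal (∑' k : ℕ, δ * ((1/3) * (1/(((k:ℝ)+8)*((k:ℝ)+9))))) :=
        (ENNReal.ofReal_tsum_of_nonneg (fun k => by positivity) hsummable).symm
    _ = ENNReal.ofReal (δ * ((1/3) * (1/8))) := by rw [htsum]
    _ ≤ ENNReal.ofReal δ := ENNReal.ofReal_le_ofReal (by nlinarith)
end

section
/- Setting: (Ω, 𝒜, P) is a probability space with filtration (F_n)_{n≥0}; p ∈ (0,1]; Λ is a finite nonempty index set with L = |Λ|; F : Λ → [0,1]; for each λ ∈ Λ, (Z_n(λ))_{n≥1} are random variables with Z_n(λ) F_n-measurable, 0 ≤ Z_n(λ) ≤ 1/p almost surely, and E[Z_n(λ) | F_{n−1}] = F(λ) almost surely for all n ≥ 1. Define F̂(λ, n) = (1/n) Σ_{u=1}^n Z_u(λ), c = 1/p², ψ(N, δ) = sqrt( (3c/N) ( 2 log log(3cN) + log(2L/δ) ) ), and n_0(δ) = min{u ≥ 1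 : c·u ≥ 173 log(4L/δ)}. Suppose λ* ∈ Λ satisfies F(λ*) = α for some α ∈ (0,1), and let η ∈ (0,1). Then for every δ ∈ (0,1), with probability at least 1 − δ the following holds simultaneously for all n ≥ n_0(δ) with ψ(n, δ) ≤ η/2 and all λ̂ ∈ Λ: if F̂(λ̂, n) ≥ α − η/2, then F(λ*) − F(λ̂) ≤ η. -/
open MeasureTheory ProbabilityTheory ENNReal

section VilleAux

variable {Ω : Type*} {m : MeasurableSpace Ω} {P : Measure Ω} [IsProbabilityMeasure P]
  {ℱ : Filtration ℕ m}

lemma exp_le_cosh_add_s12 {x B : ℝ} (t : ℝ) (hB : 0 < B) (hx : |x| ≤ B) :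
    Real.exp (t * x) ≤ Real.cosh (t * B) + Real.sinh (t * B) / B * x := by
  obtain ⟨hx1, hx2⟩ := abs_le.1 hx
  have hBne : B ≠ 0 := hB.ne'
  have key := convexOn_exp.2 (Set.mem_univ (t * B)) (Set.mem_univ (-(t * B)))
    (show (0:ℝ) ≤ (x + B) / (2 * B) from div_nonneg (by linarith) (by linarith))
    (show (0:ℝ) ≤ (B - x) / (2 * B) from div_nonneg (by linarith) (by linarith))
    (show (x + B) / (2 * B) + (B - x) / (2 * B) = 1 by field_simp; ring)
  simp only [smul_eq_mul] at key
  have harg : (x + B) / (2 * B) * (t * B) + (B - x) / (2 * B) * (-(t * B)) = t * x := by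
    field_simp; ring
  rw [harg] at key
  refine key.trans (le_of_eq ?_)
  rw [Real.cosh_eq, Real.sinh_eq]
  field_simp
  ring


variable {Ω : Type*} {m : MeasurableSpace Ω} {P : Measure Ω} [IsProbabilityMeasure P]
  {ℱ : Filtration ℕ m}

lemma condexp_exp_le (n : ℕ) {X : Ω → ℝ} {B : ℝ} (t : ℝ) (hB : 0 < B)
    (hXm : AEStronglyMeasurable X P)
    (hXbdd : ∀ᵐ ω ∂P, |X ω| ≤ B)
    (hX0 : P[X | ℱ n] =ᵐ[P] fun _ => (0:ℝ)) :
    P[fun ω => Real.exp (t * X ω) | ℱ n] ≤ᵐ[P] fun _ => Real.exp (t ^ 2 * B ^ 2 / 2) := by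
  have hXint : Integrable X P := by
    refine Integrable.mono' (integrable_const B) hXm ?_
    filter_upwards [hXbdd] with ω h using by simpa using h
  have hint1 : Integrable (fun ω => Real.exp (t * X ω)) P := by
    refine Integrable.mono' (integrable_const (Real.exp (|t| * B)))
      (Real.continuous_exp.comp_aestronglyMeasurable (hXm.const_mul t)) ?_
    filter_upwards [hXbdd] with ω h
    rw [Real.norm_eq_abs, Real.abs_exp, Real.exp_le_exp]
    calc t * X ω ≤ |t * X ω| := le_abs_self _
      _ = |t| * |X ω| := abs_mul _ _
      _ ≤ |t| * B := by exact mul_le_mul_of_nonneg_left h (abs_nonneg t)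
  have hint2 : Integrable (fun ω => Real.cosh (t * B) + Real.sinh (t * B) / B * X ω) P :=
    (integrable_const _).add (hXint.const_mul _)
  have hmono := condExp_mono (μ := P) (m := ℱ n) hint1 hint2
    (by filter_upwards [hXbdd] with ω h using exp_le_cosh_add_s12 t hB h)
  have hadd : P[fun ω => Real.cosh (t * B) + Real.sinh (t * B) / B * X ω | ℱ n]
      =ᵐ[P] fun _ => Real.cosh (t * B) := by
    have h1 : (fun ω => Real.cosh (t * B) + Real.sinh (t * B) / B * X ω)
        = (fun _ => Real.cosh (t * B)) + (Real.sinh (t * B) / B) • X := by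
      funext ω; simp [smul_eq_mul]
    rw [h1]
    refine (condExp_add (integrable_const _) (hXint.smul _) (ℱ n)).trans ?_
    rw [condExp_const (ℱ.le n)]
    have h2 := condExp_smul (μ := P) (m := ℱ n) (Real.sinh (t * B) / B) X
    filter_upwards [h2, hX0] with ω e1 e2
    simp only [Pi.add_apply, Pi.smul_apply, smul_eq_mul] at *
    rw [e1, e2]
    simp
  refine hmono.trans (hadd.trans_le (Filter.Eventually.of_forall fun ω => ?_))
  calc Real.cosh (t * B) ≤ Real.exp ((t * B) ^ 2 / 2) := Real.cosh_le_exp_half_sq _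
    _ = Real.exp (t ^ 2 * B ^ 2 / 2) := by rw [mul_pow]


lemma exp_supermartingale {X : ℕ → Ω → ℝ} {B : ℝ} (t : ℝ) (hB : 0 < B)
    (hXmeas : ∀ n, 1 ≤ n → StronglyMeasurable[ℱ n] (X n))
    (hXbdd : ∀ n, 1 ≤ n → ∀ᵐ ω ∂P, |X n ω| ≤ B)
    (hXcond : ∀ n, 1 ≤ n → P[X n | ℱ (n - 1)] =ᵐ[P] fun _ => (0:ℝ)) :
    Supermartingale
      (fun n ω => Real.exp (t * (∑ u ∈ Finset.Icc 1 n, X u ω) - n * (t ^ 2 * B ^ 2 / 2))) ℱ P := by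
  set d : ℝ := t ^ 2 * B ^ 2 / 2 with hd
  set G : ℕ → Ω → ℝ :=
    fun n ω => Real.exp (t * (∑ u ∈ Finset.Icc 1 n, X u ω) - n * d) with hG
  have hSmeas : ∀ n, StronglyMeasurable[ℱ n] (fun ω => ∑ u ∈ Finset.Icc 1 n, X u ω) := by
    intro n
    apply Finset.stronglyMeasurable_fun_sum
    intro u hu
    rw [Finset.mem_Icc] at hu
    exact (hXmeas u hu.1).mono (ℱ.mono hu.2)
  have hGmeas : ∀ n, StronglyMeasurable[ℱ n] (G n) := by
    intro n
    exact Real.continuous_exp.comp_stronglyMeasurable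
      (((hSmeas n).const_mul t).sub stronglyMeasurable_const)
  have hGbdd : ∀ n, ∀ᵐ ω ∂P, ‖G n ω‖ ≤ Real.exp (|t| * n * B + n * |d|) := by
    intro n
    have hall : ∀ᵐ ω ∂P, ∀ u ∈ Finset.Icc 1 n, |X u ω| ≤ B := by
      rw [ae_all_iff]
      intro u
      by_cases hu : u ∈ Finset.Icc 1 n
      · rw [Finset.mem_Icc] at hu
        filter_upwards [hXbdd u hu.1] with ω h _ using h
      · exact Filter.Eventually.of_forall fun ω h => absurd h hu
    filter_upwards [hall] with ω h
    rw [Real.norm_eq_abs, Real.abs_exp, Real.exp_le_exp]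
    have hsum : |∑ u ∈ Finset.Icc 1 n, X u ω| ≤ n * B := by
      calc |∑ u ∈ Finset.Icc 1 n, X u ω| ≤ ∑ u ∈ Finset.Icc 1 n, |X u ω| :=
            Finset.abs_sum_le_sum_abs _ _
        _ ≤ ∑ u ∈ Finset.Icc 1 n, B := Finset.sum_le_sum h
        _ = n * B := by
            rw [Finset.sum_const, Nat.card_Icc]
            simp [nsmul_eq_mul]
    calc t * (∑ u ∈ Finset.Icc 1 n, X u ω) - n * d
        ≤ |t * (∑ u ∈ Finset.Icc 1 n, X u ω)| + n * |d| := by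
          have := abs_mul t (∑ u ∈ Finset.Icc 1 n, X u ω)
          have h2 : -(n * d) ≤ n * |d| := by
            have : |n * d| = n * |d| := by
              rw [abs_mul]; simp
            linarith [neg_abs_le ((n:ℝ) * d)]
          linarith [le_abs_self (t * (∑ u ∈ Finset.Icc 1 n, X u ω))]
      _ ≤ |t| * n * B + n * |d| := by
          rw [abs_mul]
          have := mul_le_mul_of_nonneg_left hsum (abs_nonneg t)
          nlinarith [abs_nonneg t]
  have hGint : ∀ n, Integrable (G n) P := fun n =>
    Integrable.mono' (integrable_const _)
      ((hGmeas n).mono (ℱ.le n)).aestronglyMeasurable (hGbdd n)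
  refine supermartingale_nat (fun n => hGmeas n) hGint ?_
  intro n
  have hfac : G (n + 1) = G n * fun ω => Real.exp (t * X (n + 1) ω - d) := by
    funext ω
    simp only [hG, Pi.mul_apply, ← Real.exp_add]
    congr 1
    rw [Finset.sum_Icc_succ_top (by omega : 1 ≤ n + 1)]
    push_cast
    ring
  have hgm : AEStronglyMeasurable (fun ω => Real.exp (t * X (n + 1) ω - d)) P := by
    have : StronglyMeasurable (fun ω => Real.exp (t * X (n + 1) ω - d)) :=
      Real.continuous_exp.comp_stronglyMeasurable
        ((((hXmeas (n + 1) (by omega)).mono (ℱ.le (n + 1))).const_mul t).sub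
          stronglyMeasurable_const)
    exact this.aestronglyMeasurable
  have hgint : Integrable (fun ω => Real.exp (t * X (n + 1) ω - d)) P := by
    refine Integrable.mono' (integrable_const (Real.exp (|t| * B + |d|))) hgm ?_
    filter_upwards [hXbdd (n + 1) (by omega)] with ω h
    rw [Real.norm_eq_abs, Real.abs_exp, Real.exp_le_exp]
    have : t * X (n + 1) ω ≤ |t| * B := by
      calc t * X (n + 1) ω ≤ |t * X (n + 1) ω| := le_abs_self _
        _ = |t| * |X (n + 1) ω| := abs_mul _ _
        _ ≤ |t| * B := mul_le_mul_of_nonneg_left h (abs_nonneg t)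
    linarith [neg_abs_le d]
  have hX0 : P[X (n + 1) | ℱ n] =ᵐ[P] fun _ => (0:ℝ) := by
    have := hXcond (n + 1) (by omega)
    simpa using this
  have hcond_exp := condexp_exp_le (P := P) (ℱ := ℱ) n t hB
    ((hXmeas (n + 1) (by omega)).mono (ℱ.le (n + 1))).aestronglyMeasurable
    (hXbdd (n + 1) (by omega)) hX0
  -- conditional expectation of the factor is ≤ 1
  have hgfac : (fun ω => Real.exp (t * X (n + 1) ω - d))
      = Real.exp (-d) • fun ω => Real.exp (t * X (n + 1) ω) := by
    funext ω
    simp only [Pi.smul_apply, smul_eq_mul, ← Real.exp_add]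
    congr 1
    ring
  have hgcond : P[fun ω => Real.exp (t * X (n + 1) ω - d) | ℱ n] ≤ᵐ[P] fun _ => (1:ℝ) := by
    rw [hgfac]
    refine (condExp_smul (μ := P) (m := ℱ n) (Real.exp (-d)) _).trans_le ?_
    filter_upwards [hcond_exp] with ω h
    simp only [Pi.smul_apply, smul_eq_mul]
    calc Real.exp (-d) * (P[fun ω => Real.exp (t * X (n + 1) ω)|ℱ n]) ω
        ≤ Real.exp (-d) * Real.exp d := by
          have hh : (P[fun ω => Real.exp (t * X (n + 1) ω)|ℱ n]) ω ≤ Real.exp d := h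
          exact mul_le_mul_of_nonneg_left hh (Real.exp_pos _).le
      _ = 1 := by rw [← Real.exp_add]; simp
  have hpull := condExp_mul_of_stronglyMeasurable_left (μ := P) (hGmeas n)
    (hfac ▸ hGint (n + 1)) hgint
  rw [hfac]
  refine hpull.trans_le ?_
  filter_upwards [hgcond] with ω h
  simp only [Pi.mul_apply]
  calc G n ω * (P[fun ω => Real.exp (t * X (n + 1) ω - d)|ℱ n]) ω
      ≤ G n ω * 1 := mul_le_mul_of_nonneg_left h (Real.exp_pos _).le
    _ = G n ω := mul_one _


lemma ville_ineq {G : ℕ → Ω → ℝ} (hG : Supermartingale G ℱ P)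
    (hnn : ∀ n ω, 0 ≤ G n ω) (hG0 : ∫ ω, G 0 ω ∂P ≤ 1)
    {ε : ℝ} (hε : 0 < ε) :
    P {ω | ∃ n, ε ≤ G n ω} ≤ ENNReal.ofReal (1 / ε) := by
  set A : ℕ → Set Ω := fun n => {ω | ∃ k ≤ n, ε ≤ G k ω} with hA
  have hmeasG : ∀ k, MeasurableSet {ω | ε ≤ G k ω} := fun k =>
    measurableSet_le measurable_const
      ((hG.stronglyMeasurable k).mono (ℱ.le k)).measurable
  have hAmeas : ∀ n, MeasurableSet (A n) := by
    intro n
    have : A n = ⋃ k ∈ Finset.Iic n, {ω | ε ≤ G k ω} := by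
      ext ω
      simp [hA, Finset.mem_Iic]
    rw [this]
    exact Finset.measurableSet_biUnion _ fun k _ => hmeasG k
  have key : ∀ n, ε * (P (A n)).toReal ≤ 1 := by
    intro n
    set τ : Ω → WithTop ℕ := fun ω => (hittingBtwn G (Set.Ici ε) 0 n ω : ℕ) with hτdef
    have hτ : IsStoppingTime ℱ τ := Adapted.isStoppingTime_hittingBtwn hG.stronglyAdapted.adapted measurableSet_Ici
    have hτle : ∀ ω, τ ω ≤ n := fun ω => WithTop.coe_le_coe.2 (hittingBtwn_le ω)
    have hsv_int : Integrable (stoppedValue G τ) P := by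
      have := hG.neg.integrable_stoppedValue hτ hτle
      have heq : stoppedValue (-G) τ = -(stoppedValue G τ) := rfl
      rw [heq] at this
      simpa using this.neg
    have hsv_ge : ∀ ω ∈ A n, ε ≤ stoppedValue G τ ω := by
      rintro ω ⟨k, hk1, hk2⟩
      exact stoppedValue_hittingBtwn_mem ⟨k, ⟨Nat.zero_le _, hk1⟩, hk2⟩
    have h1 : ε * (P (A n)).toReal ≤ ∫ ω in A n, stoppedValue G τ ω ∂P :=
      setIntegral_ge_of_const_le_real (hAmeas n) (measure_ne_top P _) hsv_ge
        hsv_int.integrableOn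
    have h2 : ∫ ω in A n, stoppedValue G τ ω ∂P ≤ ∫ ω, stoppedValue G τ ω ∂P :=
      setIntegral_le_integral hsv_int
        (Filter.Eventually.of_forall fun ω => hnn _ ω)
    have h3 : ∫ ω, stoppedValue G τ ω ∂P ≤ ∫ ω, G 0 ω ∂P := by
      have := hG.neg.expected_stoppedValue_mono (isStoppingTime_const ℱ 0) hτ
        (fun ω => bot_le) hτle
      have heq : stoppedValue (-G) τ = -(stoppedValue G τ) := rfl
      have heq0 : stoppedValue (-G) (fun _ => ((0 : ℕ) : WithTop ℕ)) = -(G 0) := rfl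
      rw [heq] at this
      erw [heq0] at this
      simp only [Pi.neg_apply] at this
      rw [integral_neg, integral_neg] at this
      linarith
    linarith
  have hAbound : ∀ n, P (A n) ≤ ENNReal.ofReal (1 / ε) := by
    intro n
    rw [ENNReal.le_ofReal_iff_toReal_le (measure_ne_top P _)
      (by positivity)]
    rw [le_div_iff₀ hε, mul_comm]
    exact key n
  have hunion : {ω | ∃ n, ε ≤ G n ω} = ⋃ n, A n := by
    ext ω
    constructor
    · rintro ⟨n, hn⟩
      exact Set.mem_iUnion.2 ⟨n, ⟨n, le_rfl, hn⟩⟩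
    · intro h
      obtain ⟨n, k, _, hk⟩ := Set.mem_iUnion.1 h
      exact ⟨k, hk⟩
  have hmono : Monotone A := by
    intro a b hab ω
    rintro ⟨k, hk1, hk2⟩
    exact ⟨k, hk1.trans hab, hk2⟩
  rw [hunion, hmono.measure_iUnion]
  exact iSup_le hAbound


lemma arith2_psi (c η N M : ℝ) (hc1 : 1 ≤ c) (hη0 : 0 < η) (hN1 : 1 ≤ N) (hM0 : 0 < M)
    (hpsi : Real.sqrt ((3 * c / N) * (2 * Real.log (Real.log (3 * c * N)) + M)) ≤ η / 2) :
    12 * c * M ≤ η ^ 2 * N := by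
  have hN0 : (0 : ℝ) < N := by linarith
  have hc0 : (0 : ℝ) < c := by linarith
  have h3cN : (3 : ℝ) ≤ 3 * c * N := by nlinarith
  have hlog1 : 1 ≤ Real.log (3 * c * N) := by
    rw [Real.le_log_iff_exp_le (by linarith)]
    have := Real.exp_one_lt_d9
    linarith
  have hll : 0 ≤ Real.log (Real.log (3 * c * N)) := Real.log_nonneg hlog1
  have hq : 0 ≤ 3 * c / N := by positivity
  have hE0 : 0 ≤ (3 * c / N) * (2 * Real.log (Real.log (3 * c * N)) + M) := by nlinarith
  have hEle : (3 * c / N) * (2 * Real.log (Real.log (3 * c * N)) + M) ≤ (η / 2) ^ 2 := by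
    have h1 := pow_le_pow_left₀ (Real.sqrt_nonneg _) hpsi 2
    rwa [Real.sq_sqrt hE0] at h1
  have h2 : (3 * c / N) * M ≤ (η / 2) ^ 2 := by nlinarith
  rw [div_mul_eq_mul_div, div_le_iff₀ hN0] at h2
  nlinarith

lemma arith_final (c η N M S Flv α : ℝ) (hc1 : 1 ≤ c) (hη0 : 0 < η) (hN1 : 1 ≤ N)
    (hM0 : 0 < M)
    (hGlt : (η / (2 * c)) * S - N * ((η / (2 * c)) ^ 2 * c / 2) < M)
    (h12 : 12 * c * M ≤ η ^ 2 * N)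
    (hFl2 : (α - η / 2) * N ≤ S + N * Flv) : α - Flv ≤ η := by
  have hN0 : (0 : ℝ) < N := by linarith
  have hc0 : (0 : ℝ) < c := by linarith
  have h2c : (0 : ℝ) < 2 * c := by linarith
  have hd : (η / (2 * c)) ^ 2 * c / 2 = η ^ 2 / (8 * c) := by field_simp; ring
  have h1 : (η / (2 * c)) * S < N * (η ^ 2 / (8 * c)) + M := by rw [← hd]; linarith
  have h2 : η * S < N * η ^ 2 / 4 + 2 * c * M := by
    have hmul := mul_lt_mul_of_pos_left h1 h2c
    have hl : 2 * c * (η / (2 * c) * S) = η * S := by field_simp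
    have hr : 2 * c * (N * (η ^ 2 / (8 * c)) + M) = N * η ^ 2 / 4 + 2 * c * M := by
      field_simp; ring
    rw [hl, hr] at hmul
    exact hmul
  have h3 : η * S < 5 * N * η ^ 2 / 12 := by linarith
  have h4 := mul_le_mul_of_nonneg_left hFl2 hη0.le
  nlinarith [mul_pos hη0 hN0]


end VilleAux

/-- η-optimality: if `lstar` is the optimal threshold with true FPR
`F lstar = α`, then with probability at least `1 - δ`, simultaneously for all
`n ≥ n₀(δ)` with `ψ(n, δ) ≤ η/2` and all grid thresholds `l`, whenever the
empirical FPR of `l` is at least `α - η/2`, one has `F lstar - F l ≤ η`. -/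
theorem stmt_12
    {Ω : Type*} [m : MeasurableSpace Ω] (P : Measure Ω) [IsProbabilityMeasure P]
    {Λ : Type*} [Fintype Λ] [Nonempty Λ]
    (ℱ : Filtration ℕ m) (p : ℝ) (hp : p ∈ Set.Ioc (0 : ℝ) 1)
    (L : ℝ) (hL : L = Fintype.card Λ)
    (F : Λ → ℝ) (hF : ∀ l, F l ∈ Set.Icc (0 : ℝ) 1)
    (Z : Λ → ℕ → Ω → ℝ)
    (hmeas : ∀ l, ∀ n, 1 ≤ n → StronglyMeasurable[ℱ n] (Z l n))
    (hbdd : ∀ l, ∀ n, 1 ≤ n → ∀ᵐ ω ∂P, 0 ≤ Z l n ω ∧ Z l n ω ≤ 1 / p)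
    (hcond : ∀ l, ∀ n, 1 ≤ n → P[Z l n | ℱ (n - 1)] =ᵐ[P] fun _ => F l)
    (Fhat : Λ → ℕ → Ω → ℝ)
    (hFhat : ∀ l n, Fhat l n = fun ω => (1 / (n : ℝ)) * ∑ u ∈ Finset.Icc 1 n, Z l u ω)
    (c : ℝ) (hc : c = 1 / p ^ 2)
    (ψ : ℝ → ℝ → ℝ)
    (hψ : ∀ N δ, ψ N δ =
      Real.sqrt ((3 * c / N) * (2 * Real.log (Real.log (3 * c * N)) + Real.log (2 * L / δ))))
    (α δ η : ℝ) (hα : α ∈ Set.Ioo (0 : ℝ) 1) (hδ : δ ∈ Set.Ioo (0 : ℝ) 1)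
    (hη : η ∈ Set.Ioo (0 : ℝ) 1)
    (lstar : Λ) (hlstar : F lstar = α)
    (n₀ : ℕ) (hn₀ : IsLeast {u : ℕ | 1 ≤ u ∧ 173 * Real.log (4 * L / δ) ≤ c * u} n₀) :
    (1 : ℝ≥0∞) - ENNReal.ofReal δ ≤
      P {ω | ∀ n, n₀ ≤ n → ψ n δ ≤ η / 2 →
        ∀ l, α - η / 2 ≤ Fhat l n ω → F lstar - F l ≤ η} := by
  obtain ⟨hp0, hp1⟩ := hp
  obtain ⟨hδ0, hδ1⟩ := hδ
  obtain ⟨hη0, hη1⟩ := hη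
  set B : ℝ := 1 / p with hBdef
  have hB0 : 0 < B := by positivity
  have hB1 : 1 ≤ B := by
    rw [hBdef]
    rw [le_div_iff₀ hp0]
    linarith
  have hcB : c = B ^ 2 := by rw [hc, hBdef, div_pow, one_pow]
  have hc0 : 0 < c := by rw [hcB]; positivity
  have hc1 : 1 ≤ c := by rw [hcB]; nlinarith
  have hL1 : 1 ≤ L := by
    rw [hL]
    exact_mod_cast Nat.one_le_iff_ne_zero.2 Fintype.card_ne_zero
  set t : ℝ := η / (2 * c) with htdef
  have ht0 : 0 < t := by positivity
  set ε : ℝ := 2 * L / δ with hεdef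
  have hε0 : 0 < ε := by positivity
  have hε1 : 1 < ε := by
    rw [hεdef, lt_div_iff₀ hδ0]
    linarith
  set M : ℝ := Real.log (2 * L / δ) with hMdef
  have hM0 : 0 < M := Real.log_pos hε1
  -- the exponential supermartingales
  set G : Λ → ℕ → Ω → ℝ := fun l n ω =>
    Real.exp (t * (∑ u ∈ Finset.Icc 1 n, (Z l u ω - F l)) - n * (t ^ 2 * B ^ 2 / 2)) with hGdef
  have hsuper : ∀ l, Supermartingale (G l) ℱ P := by
    intro l
    refine exp_supermartingale (X := fun u ω => Z l u ω - F l) t hB0 ?_ ?_ ?_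
    · intro n hn
      exact (hmeas l n hn).sub stronglyMeasurable_const
    · intro n hn
      filter_upwards [hbdd l n hn] with ω h
      rw [abs_le]
      obtain ⟨h1, h2⟩ := h
      obtain ⟨hF0, hF1⟩ := hF l
      constructor
      · linarith
      · rw [hBdef] at *; linarith
    · intro n hn
      have hzi : Integrable (Z l n) P := by
        refine Integrable.mono' (integrable_const B)
          ((hmeas l n hn).mono (ℱ.le n)).aestronglyMeasurable ?_
        filter_upwards [hbdd l n hn] with ω h
        rw [Real.norm_eq_abs, abs_le]
        refine ⟨by linarith [h.1], h.2⟩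
      have heqf : ((fun u ω => Z l u ω - F l) n) = Z l n - (fun _ => F l) := rfl
      change P[Z l n - (fun _ => F l) | ℱ (n - 1)] =ᵐ[P] _
      refine (condExp_sub hzi (integrable_const _) _).trans ?_
      rw [condExp_const (ℱ.le _)]
      filter_upwards [hcond l n hn] with ω h
      simp only [Pi.sub_apply, h, sub_self]
  set bad : Λ → Set Ω := fun l => {ω | ∃ n, ε ≤ G l n ω} with hbaddef
  have hville : ∀ l, P (bad l) ≤ ENNReal.ofReal (1 / ε) := by
    intro l
    refine ville_ineq (hsuper l) (fun n ω => (Real.exp_pos _).le) ?_ hε0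
    have hG0 : G l 0 = fun _ => (1 : ℝ) := by
      funext ω
      simp [hGdef]
    rw [hG0]
    simp
  -- union bound
  have hGmeasm : ∀ l n, Measurable (G l n) := fun l n =>
    (((hsuper l).stronglyMeasurable n).mono (ℱ.le n)).measurable
  have hbadmeas : ∀ l, MeasurableSet (bad l) := by
    intro l
    have : bad l = ⋃ n, {ω | ε ≤ G l n ω} := by
      ext ω; simp [hbaddef]
    rw [this]
    exact MeasurableSet.iUnion fun n => measurableSet_le measurable_const (hGmeasm l n)
  have hbadU : P (⋃ l, bad l) ≤ ENNReal.ofReal δ := by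
    calc P (⋃ l, bad l) ≤ ∑' l, P (bad l) := measure_iUnion_le _
      _ ≤ ∑' _ : Λ, ENNReal.ofReal (1 / ε) := ENNReal.tsum_le_tsum fun l => hville l
      _ = (Fintype.card Λ : ℝ≥0∞) * ENNReal.ofReal (1 / ε) := by
          rw [tsum_fintype]
          simp [Finset.sum_const, nsmul_eq_mul]
      _ = ENNReal.ofReal (L * (1 / ε)) := by
          rw [← ENNReal.ofReal_natCast (Fintype.card Λ),
            ← ENNReal.ofReal_mul (by positivity), hL]
      _ ≤ ENNReal.ofReal δ := by
          refine ENNReal.ofReal_le_ofReal ?_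
          have : L * (1 / ε) = δ / 2 := by
            rw [hεdef]
            field_simp
          rw [this]
          linarith
  -- the good event implies the conclusion
  have hsubset : (⋃ l, bad l)ᶜ ⊆ {ω | ∀ n, n₀ ≤ n → ψ n δ ≤ η / 2 →
      ∀ l, α - η / 2 ≤ Fhat l n ω → F lstar - F l ≤ η} := by
    intro ω hω
    simp only [Set.mem_compl_iff, Set.mem_iUnion, not_exists, hbaddef,
      Set.mem_setOf_eq] at hω
    push_neg at hω
    intro n hn hpsi l hFl
    have hn1 : 1 ≤ n := le_trans hn₀.1.1 hn
    set N : ℝ := (n : ℝ) with hNdef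
    have hN1 : (1 : ℝ) ≤ N := by rw [hNdef]; exact_mod_cast hn1
    have hN0 : (0 : ℝ) < N := by linarith
    set S : ℝ := ∑ u ∈ Finset.Icc 1 n, (Z l u ω - F l) with hSdef
    -- from the good event
    have hGlt : t * S - N * (t ^ 2 * c / 2) < M := by
      have h1 := hω l n
      rw [hGdef] at h1
      simp only [not_le] at h1
      rw [show ε = Real.exp M by rw [hMdef, hεdef, Real.exp_log hε0]] at h1
      have := Real.exp_lt_exp.1 h1
      rw [hcB]
      exact this
    -- from the ψ condition: 12 c M ≤ η² N
    have hpsiN := hpsi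
    rw [hψ N δ] at hpsiN
    have h12 : 12 * c * M ≤ η ^ 2 * N := arith2_psi c η N M hc1 hη0 hN1 hM0 hpsiN
    -- conclude
    rw [hFhat l n] at hFl
    have hsum : ∑ u ∈ Finset.Icc 1 n, Z l u ω = S + N * F l := by
      rw [hSdef, Finset.sum_sub_distrib, Finset.sum_const, Nat.card_Icc]
      simp only [nsmul_eq_mul, Nat.add_sub_cancel]
      ring
    have hFl' : α - η / 2 ≤ 1 / N * (S + N * F l) := by
      rw [← hsum]
      exact hFl
    have hFl2 : (α - η / 2) * N ≤ S + N * F l := by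
      have := mul_le_mul_of_nonneg_right hFl' hN0.le
      have heq : 1 / N * (S + N * F l) * N = S + N * F l := by
        field_simp
      rwa [heq] at this
    rw [hlstar]
    exact arith_final c η N M S (F l) α hc1 hη0 hN1 hM0 hGlt h12 hFl2
  have hUmeas : MeasurableSet (⋃ l, bad l) := MeasurableSet.iUnion fun l => hbadmeas l
  calc (1 : ℝ≥0∞) - ENNReal.ofReal δ ≤ 1 - P (⋃ l, bad l) := tsub_le_tsub_left hbadU 1
    _ = P ((⋃ l, bad l)ᶜ) := (prob_compl_eq_one_sub hUmeas).symm
    _ ≤ P _ := measure_mono hsubset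
end

section
/- There exist absolute constants c_1, c_2, c_3 > 0 such that the following holds. Let γ ∈ (0,1), δ ∈ (0,1), α ∈ (0,1), c ≥ 1, and L ≥ 10, and define ψ(N, δ) = sqrt( (3c/N) ( 2 log log(3cN) + log(2L/δ) ) ) for N > 0 and N* = (c_1 · c / α²) · log( (c_2 · L / δ) · log(c_3 · c / α) ). Let X_1, X_2, … be i.i.d. Bernoulli(γ) random variables and N_t = Σ_{i=1}^t X_i. Then for every integer t ≥ (2/γ)·N* + (1/γ²)·log(2/δ), with probability at least 1 − δ/2 we have N_t ≥ N* and ψ(N_t, δ) ≤ α. -/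
set_option maxHeartbeats 2000000

open MeasureTheory ProbabilityTheory ENNReal

-- L1: mgf bound
lemma aux_mgf_bound {γ : ℝ} (h0 : 0 ≤ γ) (h1 : γ ≤ 1) :
    1 - γ + γ * Real.exp (-(2*γ)) ≤ Real.exp (-(γ^2)) := by
  have e1 : (1+γ)^2 ≤ Real.exp (2*γ) := by
    have := Real.add_one_le_exp γ
    calc (1+γ)^2 ≤ (Real.exp γ)^2 := by nlinarith [Real.exp_pos γ]
    _ = Real.exp (2*γ) := by rw [← Real.exp_nat_mul]; ring_nf
  have hp : (0:ℝ) < (1+γ)^2 := by positivity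
  have e2 : Real.exp (-(2*γ)) ≤ 1/(1+γ)^2 := by
    rw [Real.exp_neg]
    rw [one_div]
    exact inv_anti₀ hp e1
  have e3 : 1 - γ + γ * (1/(1+γ)^2) ≤ (1 - γ^2/2)^2 := by
    have key : 0 ≤ γ * ((1-γ)^2 * (γ+2)^2) :=
      mul_nonneg h0 (mul_nonneg (sq_nonneg _) (sq_nonneg _))
    have h7 : γ * (1/(1+γ)^2) = γ / (1+γ)^2 := by ring
    have h8 : γ / (1+γ)^2 ≤ (1 - γ^2/2)^2 - (1-γ) := by
      rw [div_le_iff₀ hp]; nlinarith [key]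
    linarith [h7 ▸ h8]
  have e4 : (1 - γ^2/2)^2 ≤ Real.exp (-(γ^2)) := by
    have h5 : 1 - γ^2/2 ≤ Real.exp (-(γ^2/2)) := by
      have := Real.add_one_le_exp (-(γ^2/2)); linarith
    have h6 : (0:ℝ) ≤ 1 - γ^2/2 := by nlinarith
    calc (1 - γ^2/2)^2 ≤ (Real.exp (-(γ^2/2)))^2 := by nlinarith [Real.exp_pos (-(γ^2/2))]
    _ = Real.exp (-(γ^2)) := by rw [← Real.exp_nat_mul]; ring_nf
  calc 1 - γ + γ * Real.exp (-(2*γ)) ≤ 1 - γ + γ * (1/(1+γ)^2) := by nlinarith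
  _ ≤ _ := e3.trans e4

lemma aux_det {c α δ L N : ℝ} (hc : 1 ≤ c) (hα0 : 0 < α) (hα1 : α < 1)
    (hδ0 : 0 < δ) (hδ1 : δ < 1) (hL : 10 ≤ L)
    (hN : (24*c/α^2) * Real.log ((Real.exp 1 * L/δ) * Real.log (Real.exp 1 * c/α)) ≤ N) :
    Real.sqrt ((3*c/N) * (2 * Real.log (Real.log (3*c*N)) + Real.log (2*L/δ))) ≤ α := by
  have he : (2.7182818283 : ℝ) < Real.exp 1 := Real.exp_one_gt_d9
  have he' : Real.exp 1 < 2.7182818286 := Real.exp_one_lt_d9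
  have hc0 : (0:ℝ) < c := lt_of_lt_of_le one_pos hc
  have hca : 1 ≤ c/α := (one_le_div hα0).mpr (le_trans hα1.le hc)
  set u := Real.log (c/α) with hu_def
  have hu : 0 ≤ u := Real.log_nonneg hca
  have hLδ : 10 ≤ L/δ := le_trans hL ((le_div_iff₀ hδ0).mpr (by nlinarith))
  have hlog_eca : Real.log (Real.exp 1 * c/α) = 1 + u := by
    rw [mul_div_assoc, Real.log_mul (Real.exp_ne_zero 1) (by positivity), Real.log_exp]
  set E := Real.log ((Real.exp 1 * L/δ) * Real.log (Real.exp 1 * c/α)) with hE_def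
  clear_value E
  have harg_pos : 0 < (Real.exp 1 * L/δ) * Real.log (Real.exp 1 * c/α) := by
    rw [hlog_eca]; positivity
  have heE : Real.exp E = (Real.exp 1 * L/δ) * Real.log (Real.exp 1 * c/α) := by
    rw [hE_def]; exact Real.exp_log harg_pos
  have heE' : Real.exp E = (Real.exp 1 * (L/δ)) * (1+u) := by
    rw [heE, hlog_eca]; ring
  have hdiv : Real.exp 1 * L / δ = Real.exp 1 * (L/δ) := by ring
  have hE3 : 3 ≤ E := by
    rw [hE_def, Real.le_log_iff_exp_le harg_pos, hlog_eca, hdiv]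
    have h3 : Real.exp 3 = (Real.exp 1)^3 := by
      rw [← Real.exp_nat_mul]; norm_num
    rw [h3]
    have h1u : (1:ℝ) ≤ 1 + u := by linarith
    have h10 : (10:ℝ) ≤ (L/δ) * (1+u) := by nlinarith
    have hesq : (Real.exp 1)^2 ≤ 7.39 := by nlinarith
    nlinarith [mul_le_mul_of_nonneg_left h10 (Real.exp_pos 1).le,
      mul_le_mul_of_nonneg_right hesq (Real.exp_pos 1).le]
  have hD : Real.log (2*L/δ) ≤ E := by
    rw [hE_def]
    apply Real.log_le_log (by positivity)
    rw [hlog_eca, hdiv]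
    have h2d : 2*L/δ = 2*(L/δ) := by ring
    rw [h2d]
    have h2e : 2 ≤ Real.exp 1 * (1+u) := by nlinarith
    nlinarith [mul_le_mul_of_nonneg_left h2e (show (0:ℝ) ≤ L/δ by linarith)]
  set Ns := 24*c/α^2 * E with hNs_def
  clear_value Ns
  have hα2 : (0:ℝ) < α^2 := by positivity
  have hca2 : 1 ≤ c/α^2 := by
    rw [le_div_iff₀ hα2]; nlinarith
  have hNs_lb : 72 ≤ Ns := by
    have : 24*c/α^2 = 24*(c/α^2) := by ring
    rw [hNs_def, this]; nlinarith
  have hNs_pos : 0 < Ns := by linarith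
  have hNNs : Ns ≤ N := hN
  have hN0 : 0 < N := lt_of_lt_of_le hNs_pos hNNs
  -- bound log (3 c Ns) ≤ exp E
  have hMs_eq : 3*c*Ns = 72 * (c/α)^2 * E := by
    rw [hNs_def]; field_simp; ring
  have hMs_pos : (0:ℝ) < 3*c*Ns := by positivity
  have hlogMs : Real.log (3*c*Ns) ≤ Real.exp E := by
    rw [hMs_eq]
    have hE0 : (0:ℝ) < E := by linarith
    rw [Real.log_mul (by positivity) (ne_of_gt hE0),
        Real.log_mul (by norm_num) (by positivity), Real.log_pow]
    have h72 : Real.log 72 ≤ 5 := by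
      rw [Real.log_le_iff_le_exp (by norm_num)]
      have h5 : Real.exp 5 = (Real.exp 1)^5 := by rw [← Real.exp_nat_mul]; norm_num
      rw [h5]
      calc (72:ℝ) ≤ 2.7182818283^5 := by norm_num
      _ ≤ (Real.exp 1)^5 := pow_le_pow_left₀ (by norm_num) he.le 5
    have hu2 : 10 * Real.exp 1 * u ≤ Real.exp E := by
      rw [heE']; nlinarith [Real.exp_pos 1]
    have hEe : Real.exp 1 * E ≤ Real.exp E := by
      have := Real.add_one_le_exp (E - 1)
      have h2 : Real.exp (E-1) * Real.exp 1 = Real.exp E := by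
        rw [← Real.exp_add]; ring_nf
      nlinarith [Real.exp_pos 1, Real.exp_pos (E-1)]
    have hlogE : Real.log E ≤ E - 1 := by
      have := Real.log_le_sub_one_of_pos hE0; linarith
    have h20 : 20 ≤ Real.exp E := by
      rw [heE']
      nlinarith [mul_le_mul_of_nonneg_left (show (2:ℝ) ≤ Real.exp 1*(1+u) by nlinarith)
        (show (0:ℝ) ≤ L/δ by linarith)]
    have p1 : 20 * u ≤ Real.exp E := by
      nlinarith [mul_nonneg hu (by linarith : (0:ℝ) ≤ 10 * Real.exp 1 - 20)]
    have p2 : 2 * E ≤ Real.exp E := by nlinarith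
    have hc2 : ((2:ℕ):ℝ) = (2:ℝ) := by norm_num
    rw [hc2]
    linarith
  have hlMs1 : 1 ≤ Real.log (3*c*Ns) := by
    rw [Real.le_log_iff_exp_le hMs_pos]
    nlinarith
  set q := N / Ns with hq_def
  clear_value q
  have hq1 : 1 ≤ q := by rw [hq_def]; exact (one_le_div hNs_pos).mpr hNNs
  have hNq : N = Ns * q := by rw [hq_def]; field_simp
  have hM_eq : 3*c*N = (3*c*Ns) * q := by rw [hNq]; ring
  have hlogM_le : Real.log (3*c*N) ≤ q * Real.log (3*c*Ns) := by
    rw [hM_eq, Real.log_mul (ne_of_gt hMs_pos) (by linarith)]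
    have := Real.log_le_sub_one_of_pos (lt_of_lt_of_le one_pos hq1)
    nlinarith
  have hlogM_pos : 0 < Real.log (3*c*N) := by
    have : (1:ℝ) < 3*c*N := by nlinarith
    exact Real.log_pos this
  have hLL : Real.log (Real.log (3*c*N)) ≤ (q - 1) + E := by
    calc Real.log (Real.log (3*c*N)) ≤ Real.log (q * Real.log (3*c*Ns)) :=
          Real.log_le_log hlogM_pos hlogM_le
    _ = Real.log q + Real.log (Real.log (3*c*Ns)) := by
          rw [Real.log_mul (by linarith) (by linarith)]
    _ ≤ (q - 1) + E := by
          have h1 := Real.log_le_sub_one_of_pos (lt_of_lt_of_le one_pos hq1)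
          have h2 : Real.log (Real.log (3*c*Ns)) ≤ E := by
            calc Real.log (Real.log (3*c*Ns)) ≤ Real.log (Real.exp E) :=
                  Real.log_le_log (by linarith) hlogMs
            _ = E := Real.log_exp E
          linarith
  have hcE : c * E = α^2 * Ns / 24 := by
    rw [hNs_def]; field_simp
  have hkey : 3*c*(2 * Real.log (Real.log (3*c*N)) + Real.log (2*L/δ)) ≤ (5/8) * (α^2 * N) := by
    have s1 : (q - 1) + E ≤ 2*E*q := by nlinarith
    have s2 : Real.log (Real.log (3*c*N)) ≤ 2*E*q := le_trans hLL s1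
    have s3 : 6*c*Real.log (Real.log (3*c*N)) ≤ 6*c*(2*E*q) := by nlinarith
    have s4 : 6*c*(2*E*q) = (α^2 * N)/2 := by
      rw [hNq]; linear_combination (12*q) * hcE
    have s5 : 3*c*Real.log (2*L/δ) ≤ 3*(c*E) := by nlinarith
    have s6 : 3*(c*E) ≤ (α^2*N)/8 := by
      rw [hcE]; nlinarith [mul_le_mul_of_nonneg_left hNNs hα2.le]
    nlinarith
  have hinner : (3*c/N) * (2 * Real.log (Real.log (3*c*N)) + Real.log (2*L/δ)) ≤ α^2 := by
    rw [div_mul_eq_mul_div, div_le_iff₀ hN0]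
    calc 3*c*(2 * Real.log (Real.log (3*c*N)) + Real.log (2*L/δ)) ≤ (5/8) * (α^2 * N) := hkey
    _ ≤ α^2 * N := by nlinarith
  calc Real.sqrt ((3*c/N) * (2 * Real.log (Real.log (3*c*N)) + Real.log (2*L/δ)))
      ≤ Real.sqrt (α^2) := Real.sqrt_le_sqrt hinner
  _ = α := Real.sqrt_sq hα0.le

/-- Quantitative time bound `T_f` for feasibility: there exist absolute
constants `c₁, c₂, c₃ > 0` such that for i.i.d. Bernoulli(γ) arrivals `X i`
with OOD count `N t = ∑_{i=1}^t X i`, and `N* = (c₁ c / α²) log((c₂ L / δ)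
log(c₃ c / α))`, every integer `t ≥ (2/γ) N* + (1/γ²) log(2/δ)` satisfies,
with probability at least `1 - δ/2`, both `N t ≥ N*` and `ψ(N t, δ) ≤ α`. -/
theorem stmt_14 :
    ∃ c₁ c₂ c₃ : ℝ, 0 < c₁ ∧ 0 < c₂ ∧ 0 < c₃ ∧
      ∀ (Ω : Type) (mΩ : MeasurableSpace Ω) (P : Measure Ω), IsProbabilityMeasure P →
        ∀ γ δ α c L : ℝ,
          γ ∈ Set.Ioo (0 : ℝ) 1 → δ ∈ Set.Ioo (0 : ℝ) 1 → α ∈ Set.Ioo (0 : ℝ) 1 →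
          1 ≤ c → 10 ≤ L →
          ∀ X : ℕ → Ω → ℝ,
            (∀ i, Measurable (X i)) →
            iIndepFun X P →
            (∀ i, ∀ ω, X i ω = 0 ∨ X i ω = 1) →
            (∀ i, P {ω | X i ω = 1} = ENNReal.ofReal γ) →
            ∀ t : ℕ,
              (2 / γ) * ((c₁ * c / α ^ 2) *
                    Real.log ((c₂ * L / δ) * Real.log (c₃ * c / α)))
                  + (1 / γ ^ 2) * Real.log (2 / δ) ≤ (t : ℝ) →
              (1 : ℝ≥0∞) - ENNReal.ofReal (δ / 2) ≤
                P {ω |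
                  (c₁ * c / α ^ 2) * Real.log ((c₂ * L / δ) * Real.log (c₃ * c / α))
                      ≤ ∑ i ∈ Finset.Icc 1 t, X i ω ∧
                  Real.sqrt ((3 * c / ∑ i ∈ Finset.Icc 1 t, X i ω) *
                      (2 * Real.log (Real.log (3 * c * ∑ i ∈ Finset.Icc 1 t, X i ω))
                        + Real.log (2 * L / δ))) ≤ α} := by
  refine ⟨24, Real.exp 1, Real.exp 1, by norm_num, Real.exp_pos 1, Real.exp_pos 1, ?_⟩
  intro Ω mΩ P hP γ δ α c L hγ hδ hα hc hL X hXm hXi hX01 hXγ t ht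
  obtain ⟨hγ0, hγ1⟩ := hγ
  obtain ⟨hδ0, hδ1⟩ := hδ
  obtain ⟨hα0, hα1⟩ := hα
  set Ns := (24 * c / α ^ 2) * Real.log ((Real.exp 1 * L / δ) * Real.log (Real.exp 1 * c / α))
    with hNs_def
  set s0 : ℝ := -(2*γ) with hs0_def
  -- integrability of X i
  have hXint : ∀ i, Integrable (X i) P := by
    intro i
    refine (integrable_const (1:ℝ)).mono' (hXm i).aestronglyMeasurable ?_
    filter_upwards with ω
    rcases hX01 i ω with h | h <;> simp [h]
  -- pointwise rewrite of exp (s0 * X i ω)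
  have hexp_eq : ∀ i, (fun ω => Real.exp (s0 * X i ω))
      = fun ω => 1 + (Real.exp s0 - 1) * X i ω := by
    intro i
    funext ω
    rcases hX01 i ω with h | h <;> simp [h]
  have h_int_i : ∀ i ∈ Finset.Icc 1 t, Integrable (fun ω => Real.exp (s0 * X i ω)) P := by
    intro i _
    rw [hexp_eq i]
    exact (integrable_const (1:ℝ)).add ((hXint i).const_mul _)
  -- expectation of X i
  have hEX : ∀ i, ∫ ω, X i ω ∂P = γ := by
    intro i
    have hA : MeasurableSet {ω | X i ω = 1} := (hXm i) (measurableSet_singleton 1)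
    have hind : (fun ω => X i ω) = Set.indicator {ω | X i ω = 1} (fun _ => (1:ℝ)) := by
      funext ω
      rcases hX01 i ω with h | h
      · rw [h, Set.indicator_of_notMem]
        simp [Set.mem_setOf_eq, h]
      · rw [h, Set.indicator_of_mem]
        exact h
    rw [hind, integral_indicator_const _ hA]
    simp [measureReal_def, hXγ i, ENNReal.toReal_ofReal hγ0.le]
  -- mgf of each X i
  have hmgf_i : ∀ i, mgf (X i) P s0 = 1 - γ + γ * Real.exp s0 := by
    intro i
    rw [mgf]
    rw [hexp_eq i]
    rw [integral_add (integrable_const 1) ((hXint i).const_mul _)]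
    rw [integral_const_mul, hEX i]
    simp
    ring
  -- mgf of the sum
  have hmgf_sum : mgf (∑ i ∈ Finset.Icc 1 t, X i) P s0 = (1 - γ + γ * Real.exp s0) ^ t := by
    rw [hXi.mgf_sum hXm (Finset.Icc 1 t)]
    rw [Finset.prod_congr rfl (fun i _ => hmgf_i i), Finset.prod_const, Nat.card_Icc]
    norm_num
  -- Chernoff
  have h_int_sum : Integrable (fun ω => Real.exp (s0 * (∑ i ∈ Finset.Icc 1 t, X i) ω)) P :=
    hXi.integrable_exp_mul_sum hXm h_int_i
  have hchern := measure_le_le_exp_mul_mgf (μ := P) (X := ∑ i ∈ Finset.Icc 1 t, X i) Ns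
    (by rw [hs0_def]; linarith) h_int_sum
  rw [hmgf_sum] at hchern
  -- bound the rhs
  have hrhs : Real.exp (-s0 * Ns) * (1 - γ + γ * Real.exp s0) ^ t ≤ δ/2 := by
    have hbase0 : (0:ℝ) ≤ 1 - γ + γ * Real.exp s0 := by
      have := Real.exp_pos s0; nlinarith
    have hbase : (1 - γ + γ * Real.exp s0) ≤ Real.exp (-(γ^2)) := by
      rw [hs0_def]; exact aux_mgf_bound hγ0.le hγ1.le
    have hpow : (1 - γ + γ * Real.exp s0) ^ t ≤ Real.exp (-(γ^2)) ^ t :=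
      pow_le_pow_left₀ hbase0 hbase t
    have hexp_pow : Real.exp (-(γ^2)) ^ t = Real.exp ((t:ℝ) * (-(γ^2))) := by
      rw [← Real.exp_nat_mul]
    have hB : 0 ≤ Real.log (2/δ) := Real.log_nonneg (by rw [le_div_iff₀ hδ0]; linarith)
    have hexp_arg : -s0 * Ns + (t:ℝ) * (-(γ^2)) ≤ -Real.log (2/δ) := by
      rw [hs0_def]
      have hmul := mul_le_mul_of_nonneg_left ht (le_of_lt (by positivity : (0:ℝ) < γ^2))
      have hid : γ^2 * ((2/γ) * Ns + (1/γ^2) * Real.log (2/δ))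
          = 2*γ*Ns + Real.log (2/δ) := by
        field_simp
      rw [hid] at hmul
      nlinarith
    have hfinal : Real.exp (-s0 * Ns + (t:ℝ) * (-(γ^2))) ≤ δ/2 := by
      calc Real.exp (-s0 * Ns + (t:ℝ) * (-(γ^2))) ≤ Real.exp (-Real.log (2/δ)) :=
            Real.exp_le_exp.mpr hexp_arg
      _ = δ/2 := by
            rw [Real.exp_neg, Real.exp_log (by positivity), inv_div]
    calc Real.exp (-s0 * Ns) * (1 - γ + γ * Real.exp s0) ^ t
        ≤ Real.exp (-s0 * Ns) * Real.exp (-(γ^2)) ^ t := by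
          exact mul_le_mul_of_nonneg_left hpow (Real.exp_pos _).le
    _ = Real.exp (-s0 * Ns + (t:ℝ) * (-(γ^2))) := by rw [hexp_pow, ← Real.exp_add]
    _ ≤ δ/2 := hfinal
  -- convert to ENNReal
  have hub : P {ω | (∑ i ∈ Finset.Icc 1 t, X i) ω ≤ Ns} ≤ ENNReal.ofReal (δ/2) := by
    rw [← ENNReal.ofReal_toReal (measure_ne_top P _)]
    exact ENNReal.ofReal_le_ofReal (le_trans hchern hrhs)
  -- measurability
  have hSm : Measurable (fun ω => ∑ i ∈ Finset.Icc 1 t, X i ω) :=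
    Finset.measurable_sum _ (fun i _ => hXm i)
  have hmeas_lt : MeasurableSet {ω | (fun ω => ∑ i ∈ Finset.Icc 1 t, X i ω) ω < Ns} :=
    measurableSet_lt hSm measurable_const
  -- event inclusion
  have hsub : {ω | Ns ≤ ∑ i ∈ Finset.Icc 1 t, X i ω} ⊆
      {ω | Ns ≤ ∑ i ∈ Finset.Icc 1 t, X i ω ∧
        Real.sqrt ((3 * c / ∑ i ∈ Finset.Icc 1 t, X i ω) *
          (2 * Real.log (Real.log (3 * c * ∑ i ∈ Finset.Icc 1 t, X i ω))
            + Real.log (2 * L / δ))) ≤ α} := by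
    intro ω hω
    refine ⟨hω, ?_⟩
    exact aux_det hc hα0 hα1 hδ0 hδ1 hL hω
  have hcompl : {ω | Ns ≤ ∑ i ∈ Finset.Icc 1 t, X i ω}
      = {ω | (fun ω => ∑ i ∈ Finset.Icc 1 t, X i ω) ω < Ns}ᶜ := by
    ext ω; simp [not_lt]
  have hlt_le : P {ω | (fun ω => ∑ i ∈ Finset.Icc 1 t, X i ω) ω < Ns}
      ≤ ENNReal.ofReal (δ/2) := by
    refine le_trans (measure_mono ?_) hub
    intro ω hω
    simp only [Set.mem_setOf_eq] at *
    rw [Finset.sum_apply]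
    exact le_of_lt hω
  calc (1 : ℝ≥0∞) - ENNReal.ofReal (δ / 2)
      ≤ 1 - P {ω | (fun ω => ∑ i ∈ Finset.Icc 1 t, X i ω) ω < Ns} :=
        tsub_le_tsub_left hlt_le 1
  _ = P {ω | Ns ≤ ∑ i ∈ Finset.Icc 1 t, X i ω} := by
        rw [hcompl, measure_compl hmeas_lt (measure_ne_top _ _), measure_univ]
  _ ≤ _ := measure_mono hsub
end
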